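/- arXiv:2009.07137 — 13 statements merged into one kernel-verified Lean document; each statement's English description precedes it below -/
import Mathlib

section
/- Let ρ_1, ..., ρ_{n-1} be real numbers with |ρ_i| < 1 for all i, and define the symmetric n×n matrix R by R_{kl} = ρ_k ρ_{k+1} ⋯ ρ_{l-1} for k ≤ l (so R_{kk} = 1). Then R is invertible and its inverse G is tridiagonal with G_{11} = 1/(1-ρ_1²), G_{nn} = 1/(1-ρ_{n-1}²), G_{ii} = (1-ρ_{i-1}²ρ_i²)/((1-ρ_{i-1}²)(1-ρ_i²)) for 2 ≤ i ≤ n-1, and G_{i,i+1} = G_{i+1,i} = -ρ_i/(1-ρ_i²). -/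
open Finset

noncomputable def rfun (ρ : ℕ → ℝ) (k l : ℕ) : ℝ :=
  ∏ j ∈ Finset.Ico (min k l) (max k l), ρ j

noncomputable def Gfun (n : ℕ) (ρ : ℕ → ℝ) (i j : ℕ) : ℝ :=
  if i = j then
    1 + (if 0 < i then ρ (i - 1) ^ 2 / (1 - ρ (i - 1) ^ 2) else 0)
      + (if i + 1 < n then ρ i ^ 2 / (1 - ρ i ^ 2) else 0)
  else if j = i + 1 then -ρ i / (1 - ρ i ^ 2)
  else if i = j + 1 then -ρ j / (1 - ρ j ^ 2)
  else 0

lemma rfun_self (ρ : ℕ → ℝ) (k : ℕ) : rfun ρ k k = 1 := by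
  simp [rfun]

lemma rfun_succ (ρ : ℕ → ℝ) {k l : ℕ} (h : k ≤ l) :
    rfun ρ k (l + 1) = rfun ρ k l * ρ l := by
  unfold rfun
  rw [min_eq_left h, max_eq_right h, min_eq_left (by omega), max_eq_right (by omega),
    Finset.prod_Ico_succ_top h]

lemma rfun_down (ρ : ℕ → ℝ) {k l : ℕ} (h : l < k) :
    rfun ρ k l = ρ l * rfun ρ k (l + 1) := by
  unfold rfun
  rw [min_eq_right (le_of_lt h), max_eq_left (le_of_lt h),
      min_eq_right (by omega), max_eq_left (by omega),
      Finset.prod_eq_prod_Ico_succ_bot h]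

lemma Gfun_diag (n : ℕ) (ρ : ℕ → ℝ) (i : ℕ) :
    Gfun n ρ i i = 1 + (if 0 < i then ρ (i - 1) ^ 2 / (1 - ρ (i - 1) ^ 2) else 0)
      + (if i + 1 < n then ρ i ^ 2 / (1 - ρ i ^ 2) else 0) := by
  simp [Gfun]

lemma Gfun_super (n : ℕ) (ρ : ℕ → ℝ) (i : ℕ) :
    Gfun n ρ i (i + 1) = -ρ i / (1 - ρ i ^ 2) := by
  unfold Gfun
  rw [if_neg (by omega), if_pos rfl]

lemma Gfun_sub (n : ℕ) (ρ : ℕ → ℝ) (i : ℕ) :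
    Gfun n ρ (i + 1) i = -ρ i / (1 - ρ i ^ 2) := by
  unfold Gfun
  rw [if_neg (by omega), if_neg (by omega), if_pos rfl]

lemma Gfun_zero (n : ℕ) (ρ : ℕ → ℝ) {i j : ℕ} (h1 : i ≠ j) (h2 : j ≠ i + 1) (h3 : i ≠ j + 1) :
    Gfun n ρ i j = 0 := by
  simp [Gfun, h1, h2, h3]

lemma key (n : ℕ) (hn : 2 ≤ n) (ρ : ℕ → ℝ)
    (hd : ∀ i, i + 1 < n → (1:ℝ) - ρ i ^ 2 ≠ 0)
    {k l : ℕ} (hk : k < n) (hl : l < n) :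
    ∑ j ∈ range n, rfun ρ k j * Gfun n ρ j l = if k = l then 1 else 0 := by
  have hsum : ∀ (s : Finset ℕ), s ⊆ range n →
      (∀ j ∈ range n, j ∉ s → rfun ρ k j * Gfun n ρ j l = 0) →
      ∑ j ∈ range n, rfun ρ k j * Gfun n ρ j l = ∑ j ∈ s, rfun ρ k j * Gfun n ρ j l :=
    fun s hs hz => (Finset.sum_subset hs hz).symm
  by_cases hl0 : l = 0
  · subst hl0
    have h0 := hd 0 (by omega)
    rw [hsum {0, 1} (by intro x hx; simp at hx ⊢; omega)
        (fun j hj hjs => by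
          simp at hj hjs
          rw [Gfun_zero n ρ (by omega) (by omega) (by omega), mul_zero])]
    rw [Finset.sum_pair (by omega : (0:ℕ) ≠ 1)]
    have e1 : Gfun n ρ 1 0 = -ρ 0 / (1 - ρ 0 ^ 2) := Gfun_sub n ρ 0
    rw [e1, Gfun_diag, if_neg (by omega), if_pos (by omega)]
    by_cases hk0 : k = 0
    · subst hk0
      rw [if_pos rfl, rfun_self]
      have e2 : rfun ρ 0 1 = ρ 0 := by
        have := rfun_succ ρ (le_refl 0)
        rw [rfun_self] at this
        simpa using this
      rw [e2]
      field_simp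
      try ring
    · rw [if_neg (by omega)]
      rw [rfun_down ρ (show 0 < k by omega)]
      field_simp
      try ring
  · obtain ⟨m, rfl⟩ : ∃ m, l = m + 1 := ⟨l - 1, by omega⟩
    have hdm := hd m (by omega)
    by_cases hlt : m + 2 < n
    · -- interior case
      have hdm1 := hd (m + 1) (by omega)
      rw [hsum {m, m + 1, m + 2} (by intro x hx; simp at hx ⊢; omega)
          (fun j hj hjs => by
            simp at hj hjs
            rw [Gfun_zero n ρ (by omega) (by omega) (by omega), mul_zero])]
      rw [Finset.sum_insert (by simp), Finset.sum_pair (by omega : m + 1 ≠ m + 2)]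
      rw [Gfun_super, Gfun_diag, if_pos (by omega), if_pos (by omega),
          show Gfun n ρ (m + 2) (m + 1) = -ρ (m+1) / (1 - ρ (m+1) ^ 2) from Gfun_sub n ρ (m+1),
          show m + 1 - 1 = m from rfl]
      rcases lt_trichotomy k (m + 1) with hc | hc | hc
      · rw [if_neg (by omega)]
        have e1 : rfun ρ k (m + 1) = rfun ρ k m * ρ m := rfun_succ ρ (by omega)
        have e2 : rfun ρ k (m + 2) = rfun ρ k (m + 1) * ρ (m + 1) := rfun_succ ρ (by omega)
        rw [e2, e1]
        field_simp
        try ring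
      · subst hc
        rw [if_pos rfl, rfun_self]
        have e1 : rfun ρ (m + 1) m = ρ m := by
          rw [rfun_down ρ (show m < m + 1 by omega), rfun_self, mul_one]
        have e2 : rfun ρ (m + 1) (m + 2) = ρ (m + 1) := by
          have := rfun_succ ρ (le_refl (m + 1))
          rw [rfun_self] at this
          simpa using this
        rw [e1, e2]
        field_simp
        try ring
      · rw [if_neg (by omega)]
        have e1 : rfun ρ k (m + 1) = ρ (m + 1) * rfun ρ k (m + 2) := rfun_down ρ (by omega)
        have e2 : rfun ρ k m = ρ m * rfun ρ k (m + 1) := rfun_down ρ (by omega)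
        rw [e2, e1]
        field_simp
        try ring
    · -- last row/column case : m + 2 = n
      have hmn : m + 2 = n := by omega
      rw [hsum {m, m + 1} (by intro x hx; simp at hx ⊢; omega)
          (fun j hj hjs => by
            simp at hj hjs
            rw [Gfun_zero n ρ (by omega) (by omega) (by omega), mul_zero])]
      rw [Finset.sum_pair (by omega : m ≠ m + 1)]
      rw [Gfun_super, Gfun_diag, if_pos (by omega), if_neg (by omega),
          show m + 1 - 1 = m from rfl]
      rcases lt_trichotomy k (m + 1) with hc | hc | hc
      · rw [if_neg (by omega)]
        have e1 : rfun ρ k (m + 1) = rfun ρ k m * ρ m := rfun_succ ρ (by omega)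
        rw [e1]
        field_simp
        try ring
      · subst hc
        rw [if_pos rfl, rfun_self]
        have e1 : rfun ρ (m + 1) m = ρ m := by
          rw [rfun_down ρ (show m < m + 1 by omega), rfun_self, mul_one]
        rw [e1]
        field_simp
        try ring
      · omega

/-- The inverse of the Markov correlation matrix `R` (with `R k l = ρ_k ⋯ ρ_{l-1}` for `k ≤ l`)
is tridiagonal, with explicit entries. Indices are 0-based: `ρ i` is the correlation of the
variables with (0-based) indices `i` and `i+1`. -/
theorem stmt1 (n : ℕ) (hn : 2 ≤ n) (ρ : ℕ → ℝ) (hρ : ∀ i, i + 1 < n → |ρ i| < 1)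
    (R : Matrix (Fin n) (Fin n) ℝ)
    (hR : ∀ k l : Fin n, R k l = ∏ j ∈ Finset.Ico (min (k : ℕ) (l : ℕ)) (max (k : ℕ) (l : ℕ)), ρ j) :
    IsUnit R.det ∧
    (∀ i j : Fin n, (i : ℕ) + 2 ≤ (j : ℕ) ∨ (j : ℕ) + 2 ≤ (i : ℕ) → R⁻¹ i j = 0) ∧
    R⁻¹ ⟨0, by omega⟩ ⟨0, by omega⟩ = 1 / (1 - ρ 0 ^ 2) ∧
    R⁻¹ ⟨n - 1, by omega⟩ ⟨n - 1, by omega⟩ = 1 / (1 - ρ (n - 2) ^ 2) ∧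
    (∀ i : Fin n, 1 ≤ (i : ℕ) → (i : ℕ) ≤ n - 2 →
      R⁻¹ i i = (1 - ρ ((i : ℕ) - 1) ^ 2 * ρ (i : ℕ) ^ 2) /
        ((1 - ρ ((i : ℕ) - 1) ^ 2) * (1 - ρ (i : ℕ) ^ 2))) ∧
    (∀ i j : Fin n, (j : ℕ) = (i : ℕ) + 1 →
      R⁻¹ i j = -ρ (i : ℕ) / (1 - ρ (i : ℕ) ^ 2) ∧
      R⁻¹ j i = -ρ (i : ℕ) / (1 - ρ (i : ℕ) ^ 2)) := by
  have hd : ∀ i, i + 1 < n → (1:ℝ) - ρ i ^ 2 ≠ 0 := by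
    intro i hi
    have h := hρ i hi
    have h0 := abs_nonneg (ρ i)
    have h2 : ρ i ^ 2 < 1 := by nlinarith [sq_abs (ρ i)]
    linarith
  have hRG : R * (Matrix.of fun i j : Fin n => Gfun n ρ (i : ℕ) (j : ℕ)) = 1 := by
    ext k l
    rw [Matrix.mul_apply, Matrix.one_apply]
    have hstep : ∑ j : Fin n, R k j * (Matrix.of fun i j : Fin n => Gfun n ρ (i : ℕ) (j : ℕ)) j l
        = ∑ j ∈ range n, rfun ρ (k : ℕ) j * Gfun n ρ j (l : ℕ) := by
      rw [← Fin.sum_univ_eq_sum_range (fun j => rfun ρ (k : ℕ) j * Gfun n ρ j (l : ℕ)) n]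
      refine Finset.sum_congr rfl fun j _ => ?_
      rw [hR k j]
      rfl
    rw [hstep, key n hn ρ hd k.isLt l.isLt]
    by_cases h : k = l
    · simp [h]
    · rw [if_neg (by simpa [Fin.ext_iff] using h), if_neg h]
  have hdet : IsUnit R.det := Matrix.isUnit_det_of_right_inverse hRG
  have hinv : R⁻¹ = Matrix.of fun i j : Fin n => Gfun n ρ (i : ℕ) (j : ℕ) :=
    Matrix.inv_eq_right_inv hRG
  refine ⟨hdet, ?_, ?_, ?_, ?_, ?_⟩
  · intro i j hij
    rw [hinv]
    show Gfun n ρ (i : ℕ) (j : ℕ) = 0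
    exact Gfun_zero n ρ (by omega) (by omega) (by omega)
  · rw [hinv]
    show Gfun n ρ 0 0 = 1 / (1 - ρ 0 ^ 2)
    rw [Gfun_diag, if_neg (by omega), if_pos (by omega)]
    have h0 := hd 0 (by omega)
    field_simp
    ring
  · rw [hinv]
    show Gfun n ρ (n - 1) (n - 1) = 1 / (1 - ρ (n - 2) ^ 2)
    rw [Gfun_diag, if_pos (by omega), if_neg (by omega),
        show n - 1 - 1 = n - 2 by omega]
    have h0 := hd (n - 2) (by omega)
    field_simp
    try ring
  · intro i h1 h2
    rw [hinv]
    show Gfun n ρ (i : ℕ) (i : ℕ) = _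
    rw [Gfun_diag, if_pos (by omega), if_pos (by omega)]
    have ha := hd ((i : ℕ) - 1) (by omega)
    have hb := hd (i : ℕ) (by omega)
    field_simp
    ring
  · intro i j hj
    rw [hinv]
    constructor
    · show Gfun n ρ (i : ℕ) (j : ℕ) = _
      rw [hj]
      exact Gfun_super n ρ i
    · show Gfun n ρ (j : ℕ) (i : ℕ) = _
      rw [hj]
      exact Gfun_sub n ρ i
end

section
/- Let ρ_1, ..., ρ_{n-1} be reals with |ρ_i| < 1 and let R be the n×n matrix with R_{kl} = ρ_k ρ_{k+1} ⋯ ρ_{l-1} for k ≤ l and R_{kk}=1. Then det R = ∏_{i=1}^{n-1} (1 - ρ_i²). In particular R is positive definite. -/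
open Finset Matrix

lemma posDef_mul_mul_transpose {n : ℕ} (A D : Matrix (Fin n) (Fin n) ℝ)
    (hD : D.PosDef) (hA : IsUnit A.det) : (A * D * Aᵀ).PosDef := by
  have hDt : Dᵀ = D := by
    rw [← Matrix.conjTranspose_eq_transpose_of_trivial]
    exact hD.isHermitian.eq
  refine Matrix.PosDef.of_dotProduct_mulVec_pos ?_ ?_
  · show (A * D * Aᵀ)ᴴ = A * D * Aᵀ
    rw [Matrix.conjTranspose_eq_transpose_of_trivial, Matrix.transpose_mul,
      Matrix.transpose_mul, Matrix.transpose_transpose, hDt, Matrix.mul_assoc]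
  · intro x hx
    have hy : Aᵀ *ᵥ x ≠ 0 := by
      have hinj : Function.Injective (Aᵀ.mulVec) := by
        rw [Matrix.mulVec_injective_iff_isUnit]
        rwa [Matrix.isUnit_iff_isUnit_det, Matrix.det_transpose]
      intro h
      apply hx
      have := hinj (a₂ := 0) (by simpa using h)
      exact this
    have := hD.dotProduct_mulVec_pos hy
    have key : star x ⬝ᵥ (A * D * Aᵀ) *ᵥ x = star (Aᵀ *ᵥ x) ⬝ᵥ D *ᵥ (Aᵀ *ᵥ x) := by
      rw [← Matrix.mulVec_mulVec, ← Matrix.mulVec_mulVec, Matrix.dotProduct_mulVec (star x)]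
      congr 1
      simp [Matrix.mulVec_transpose, star_trivial]
    rw [key]
    exact this

lemma telescope_sum (ρ : ℕ → ℝ) (d : ℕ → ℝ) (hd0 : d 0 = 1)
    (hds : ∀ j, d (j + 1) = 1 - ρ j ^ 2) (k : ℕ) :
    ∑ m ∈ range (k + 1), d m * (∏ i ∈ Ico m k, ρ i) ^ 2 = 1 := by
  induction k with
  | zero => simp [hd0]
  | succ k ih =>
    rw [Finset.sum_range_succ]
    have h1 : ∀ m ∈ range (k + 1), d m * (∏ i ∈ Ico m (k + 1), ρ i) ^ 2
        = ρ k ^ 2 * (d m * (∏ i ∈ Ico m k, ρ i) ^ 2) := by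
      intro m hm
      rw [Finset.mem_range] at hm
      rw [Finset.prod_Ico_succ_top (by omega)]
      ring
    rw [Finset.sum_congr rfl h1, ← Finset.mul_sum, ih, hds k]
    simp

/-- The determinant of the Markov correlation matrix `R` (with `R k l = ρ_k ⋯ ρ_{l-1}` for
`k ≤ l`) equals `∏ (1 - ρ_i²)`; in particular `R` is positive definite. -/
theorem stmt2 (n : ℕ) (ρ : ℕ → ℝ) (hρ : ∀ i, i + 1 < n → |ρ i| < 1)
    (R : Matrix (Fin n) (Fin n) ℝ)
    (hR : ∀ k l : Fin n, R k l = ∏ j ∈ Finset.Ico (min (k : ℕ) (l : ℕ)) (max (k : ℕ) (l : ℕ)), ρ j) :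
    R.det = ∏ i ∈ Finset.range (n - 1), (1 - ρ i ^ 2) ∧ R.PosDef := by
  classical
  set d : ℕ → ℝ := fun m => if m = 0 then 1 else 1 - ρ (m - 1) ^ 2 with hd
  have hd0 : d 0 = 1 := rfl
  have hds : ∀ j, d (j + 1) = 1 - ρ j ^ 2 := fun j => rfl
  set A : Matrix (Fin n) (Fin n) ℝ := fun k j =>
    if (j : ℕ) ≤ (k : ℕ) then ∏ i ∈ Ico (j : ℕ) (k : ℕ), ρ i else 0 with hA
  set D : Matrix (Fin n) (Fin n) ℝ := Matrix.diagonal (fun m => d (m : ℕ)) with hD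
  -- key: entries of A * D * Aᵀ for k ≤ l
  have key : ∀ k l : Fin n, (k : ℕ) ≤ (l : ℕ) →
      (A * D * Aᵀ) k l = ∏ i ∈ Ico (k : ℕ) (l : ℕ), ρ i := by
    intro k l hkl
    rw [Matrix.mul_assoc, Matrix.mul_apply]
    have hterm : ∀ m : Fin n, A k m * (D * Aᵀ) m l
        = (if (m : ℕ) ≤ (k : ℕ) then
            d m * ((∏ i ∈ Ico (m : ℕ) (k : ℕ), ρ i) ^ 2 * ∏ i ∈ Ico (k : ℕ) (l : ℕ), ρ i)
          else 0) := by
      intro m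
      rw [Matrix.mul_apply]
      rw [Finset.sum_eq_single m]
      · simp only [hD, Matrix.diagonal_apply_eq, Matrix.transpose_apply]
        show A k m * (d m * A l m) = _
        by_cases hmk : (m : ℕ) ≤ (k : ℕ)
        · have hml : (m : ℕ) ≤ (l : ℕ) := le_trans hmk hkl
          simp only [hA, hmk, hml, if_pos]
          have : ∏ i ∈ Ico (m : ℕ) (l : ℕ), ρ i
              = (∏ i ∈ Ico (m : ℕ) (k : ℕ), ρ i) * ∏ i ∈ Ico (k : ℕ) (l : ℕ), ρ i :=
            (Finset.prod_Ico_consecutive _ hmk hkl).symm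
          rw [this]
          ring
        · simp only [hA, hmk, if_neg, if_false]
          simp [hmk]
      · intro b _ hb
        simp [hD, Matrix.diagonal_apply_ne _ (Ne.symm hb)]
      · simp
    rw [Finset.sum_congr rfl (fun m _ => hterm m)]
    have hkn : (k : ℕ) + 1 ≤ n := k.2
    set g : ℕ → ℝ := fun m =>
      if m ≤ (k : ℕ) then
        d m * ((∏ i ∈ Ico m (k : ℕ), ρ i) ^ 2 * ∏ i ∈ Ico (k : ℕ) (l : ℕ), ρ i)
      else 0 with hg
    have h1 : ∑ m : Fin n, (if (m : ℕ) ≤ (k : ℕ) then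
        d (m : ℕ) * ((∏ i ∈ Ico (m : ℕ) (k : ℕ), ρ i) ^ 2 * ∏ i ∈ Ico (k : ℕ) (l : ℕ), ρ i)
        else 0) = ∑ m ∈ range n, g m := Fin.sum_univ_eq_sum_range g n
    rw [h1]
    have h2 : ∑ m ∈ range n, g m = ∑ m ∈ range ((k : ℕ) + 1), g m := by
      refine (Finset.sum_subset (Finset.range_subset_range.mpr hkn) ?_).symm
      intro x _ hx
      rw [Finset.mem_range] at hx
      simp only [hg]
      rw [if_neg (by omega)]
    rw [h2]
    have h3 : ∑ m ∈ range ((k : ℕ) + 1), g m = ∑ m ∈ range ((k : ℕ) + 1),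
        d m * ((∏ i ∈ Ico m (k : ℕ), ρ i) ^ 2 * ∏ i ∈ Ico (k : ℕ) (l : ℕ), ρ i) := by
      apply Finset.sum_congr rfl
      intro m hm
      rw [Finset.mem_range] at hm
      simp only [hg]
      rw [if_pos (by omega)]
    rw [h3]
    have := telescope_sum ρ d hd0 hds (k : ℕ)
    calc ∑ m ∈ range ((k : ℕ) + 1),
            d m * ((∏ i ∈ Ico m (k : ℕ), ρ i) ^ 2 * ∏ i ∈ Ico (k : ℕ) (l : ℕ), ρ i)
        = (∑ m ∈ range ((k : ℕ) + 1), d m * (∏ i ∈ Ico m (k : ℕ), ρ i) ^ 2)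
            * ∏ i ∈ Ico (k : ℕ) (l : ℕ), ρ i := by
          rw [Finset.sum_mul]; apply Finset.sum_congr rfl; intro m _; ring
      _ = ∏ i ∈ Ico (k : ℕ) (l : ℕ), ρ i := by rw [this, one_mul]
  -- R = A * D * Aᵀ
  have hRfact : R = A * D * Aᵀ := by
    ext k l
    rcases le_total (k : ℕ) (l : ℕ) with h | h
    · rw [key k l h, hR k l, min_eq_left h, max_eq_right h]
    · have hsym : (A * D * Aᵀ) k l = (A * D * Aᵀ) l k := by
        have hsymm : (A * D * Aᵀ)ᵀ = A * D * Aᵀ := by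
          rw [Matrix.transpose_mul, Matrix.transpose_mul, Matrix.transpose_transpose,
            hD, Matrix.diagonal_transpose, Matrix.mul_assoc]
        conv_lhs => rw [← hsymm]
        rfl
      rw [hsym, key l k h, hR k l, min_eq_right h, max_eq_left h]
  -- determinant of A
  have hAtri : A.BlockTriangular OrderDual.toDual := by
    intro i j hij
    have : (i : ℕ) < (j : ℕ) := hij
    have h2 : ¬ ((j : ℕ) ≤ (i : ℕ)) := by omega
    simp only [hA]
    rw [if_neg h2]
  have hdetA : A.det = 1 := by
    rw [Matrix.det_of_lowerTriangular A hAtri]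
    apply Finset.prod_eq_one
    intro i _
    simp [hA]
  have hdpos : ∀ m : Fin n, 0 < d (m : ℕ) := by
    intro m
    rcases Nat.eq_zero_or_pos (m : ℕ) with h | h
    · rw [h, hd0]; norm_num
    · obtain ⟨j, hj⟩ : ∃ j, (m : ℕ) = j + 1 := ⟨(m : ℕ) - 1, by omega⟩
      rw [hj, hds j]
      have : |ρ j| < 1 := hρ j (by have := m.2; omega)
      nlinarith [abs_nonneg (ρ j), sq_abs (ρ j), this]
  have hdetD : D.det = ∏ i ∈ Finset.range (n - 1), (1 - ρ i ^ 2) := by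
    rw [hD, Matrix.det_diagonal]
    rw [Fin.prod_univ_eq_prod_range (fun m => d m) n]
    rcases Nat.eq_zero_or_pos n with h | h
    · simp [h]
    · obtain ⟨m, rfl⟩ : ∃ m, n = m + 1 := ⟨n - 1, by omega⟩
      rw [Finset.prod_range_succ']
      simp only [Nat.add_sub_cancel]
      rw [hd0, mul_one]
      apply Finset.prod_congr rfl
      intro i _
      exact hds i
  constructor
  · rw [hRfact, Matrix.det_mul, Matrix.det_mul, hdetA, Matrix.det_transpose, hdetA,
      one_mul, mul_one, hdetD]
  · rw [hRfact]
    exact posDef_mul_mul_transpose A D (Matrix.PosDef.diagonal hdpos)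
      (by rw [hdetA]; exact isUnit_one)
end

section
/- Let C be a symmetric positive definite n×n real matrix with C_{ii} = 1 for all i. Then det C ≤ ∏_{i=1}^{n-1} (1 - C_{i,i+1}²), with equality if and only if C_{kl} = ∏_{j=k}^{l-1} C_{j,j+1} for all k < l. -/
open Finset

section Helpers
open Matrix

lemma dot_symm {k : ℕ} (M : Matrix (Fin k) (Fin k) ℝ) (hM : Mᵀ = M) (v w : Fin k → ℝ) :
    v ⬝ᵥ (M *ᵥ w) = w ⬝ᵥ (M *ᵥ v) := by
  simp only [dotProduct, Matrix.mulVec, dotProduct, Finset.mul_sum]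
  rw [Finset.sum_comm]
  refine Finset.sum_congr rfl fun i _ => Finset.sum_congr rfl fun j _ => ?_
  have h := congrFun (congrFun hM j) i
  simp only [Matrix.transpose_apply] at h
  rw [← h]; ring

lemma mul_eq_mul_iff {a a' b b' : ℝ} (ha : 0 < a) (hb : 0 < b) (ha' : a ≤ a') (hb' : b ≤ b') :
    a * b = a' * b' ↔ a = a' ∧ b = b' := by
  constructor
  · intro h; constructor <;> nlinarith
  · rintro ⟨rfl, rfl⟩; rfl

lemma posdef_castSucc {m : ℕ} {C : Matrix (Fin (m+1)) (Fin (m+1)) ℝ} (h : C.PosDef) :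
    (C.submatrix Fin.castSucc Fin.castSucc).PosDef := by
  refine Matrix.PosDef.of_dotProduct_mulVec_pos ?_ ?_
  · have h1 := h.1
    rw [Matrix.IsHermitian] at h1 ⊢
    rw [Matrix.conjTranspose_submatrix, h1]
  · intro x hx
    have hy : (Fin.snoc x 0 : Fin (m+1) → ℝ) ≠ 0 := by
      intro h0
      apply hx
      funext i
      have := congrFun h0 i.castSucc
      simpa [Fin.snoc_castSucc] using this
    have := h.dotProduct_mulVec_pos hy
    convert this using 1
    simp only [star_trivial, dotProduct, Matrix.mulVec, Matrix.submatrix_apply]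
    rw [Fin.sum_univ_castSucc]
    simp only [Fin.snoc_castSucc, Fin.snoc_last, zero_mul, add_zero]
    refine Finset.sum_congr rfl fun i _ => ?_
    congr 1
    rw [Fin.sum_univ_castSucc]
    simp [Fin.snoc_castSucc, Fin.snoc_last]

lemma det_split {m : ℕ} (C : Matrix (Fin (m+1+1)) (Fin (m+1+1)) ℝ)
    (hsym : Cᵀ = C) (hu : IsUnit (C.submatrix Fin.castSucc Fin.castSucc).det) :
    C.det = (C.submatrix Fin.castSucc Fin.castSucc).det *
      ((C (Fin.last (m+1)) (Fin.last (m+1))) -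
        (fun i : Fin (m+1) => C i.castSucc (Fin.last (m+1))) ⬝ᵥ
        ((C.submatrix Fin.castSucc Fin.castSucc)⁻¹ *ᵥ
          fun i : Fin (m+1) => C i.castSucc (Fin.last (m+1)))) := by
  classical
  set A := C.submatrix Fin.castSucc Fin.castSucc with hA
  set b : Fin (m+1) → ℝ := fun i => C i.castSucc (Fin.last (m+1)) with hb
  have hCM : C.det = (Matrix.fromBlocks A (Matrix.of fun i (_ : Fin 1) => b i)
      (Matrix.of fun (_ : Fin 1) j => b j)
      (Matrix.of fun (_ _ : Fin 1) => C (Fin.last (m+1)) (Fin.last (m+1)))).det := by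
    rw [← Matrix.det_submatrix_equiv_self finSumFinEquiv C]
    congr 1
    ext x y
    have hlast : ∀ j : Fin 1, finSumFinEquiv (Sum.inr j : Fin (m+1) ⊕ Fin 1) = Fin.last (m+1) := by
      intro j
      rw [finSumFinEquiv_apply_right]
      ext
      simp [Fin.val_last, Subsingleton.elim j 0]
    have hcast : ∀ i : Fin (m+1), finSumFinEquiv (Sum.inl i : Fin (m+1) ⊕ Fin 1) = i.castSucc := by
      intro i
      rw [finSumFinEquiv_apply_left]
      ext
      simp
    cases x with
    | inl i =>
      cases y with
      | inl j => simp [Matrix.submatrix_apply, hcast, hA]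
      | inr j => simp [Matrix.submatrix_apply, hcast, hlast, hb]
    | inr i =>
      cases y with
      | inl j =>
        simp only [Matrix.submatrix_apply, hcast, hlast, Matrix.fromBlocks_apply₂₁,
          Matrix.of_apply]
        have h := congrFun (congrFun hsym (j.castSucc)) (Fin.last (m+1))
        simp only [Matrix.transpose_apply] at h
        rw [h]
      | inr j => simp [Matrix.submatrix_apply, hlast]
  haveI := Matrix.invertibleOfIsUnitDet A hu
  rw [hCM, Matrix.det_fromBlocks₁₁, Matrix.invOf_eq_nonsing_inv]
  congr 1
  rw [Matrix.det_fin_one]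
  simp only [Matrix.sub_apply, Matrix.mul_apply, Matrix.of_apply, dotProduct, Matrix.mulVec]
  congr 1
  simp only [Finset.sum_mul, Finset.mul_sum]
  rw [Finset.sum_comm]
  refine Finset.sum_congr rfl fun i _ => Finset.sum_congr rfl fun j _ => ?_
  ring

lemma dot_symm' {k : ℕ} (M : Matrix (Fin k) (Fin k) ℝ) (hM : Mᵀ = M) (v w : Fin k → ℝ) :
    v ⬝ᵥ (M *ᵥ w) = w ⬝ᵥ (M *ᵥ v) := by
  simp only [dotProduct, Matrix.mulVec, dotProduct, Finset.mul_sum]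
  rw [Finset.sum_comm]
  refine Finset.sum_congr rfl fun i _ => Finset.sum_congr rfl fun j _ => ?_
  have h := congrFun (congrFun hM j) i
  simp only [Matrix.transpose_apply] at h
  rw [← h]; ring

lemma cs_step {k : ℕ} (A : Matrix (Fin k) (Fin k) ℝ) (hA : A.PosDef) (b : Fin k → ℝ)
    (e : Fin k) (he : A e e = 1) :
    (b e)^2 ≤ b ⬝ᵥ (A⁻¹ *ᵥ b) ∧
      (b ⬝ᵥ (A⁻¹ *ᵥ b) = (b e)^2 ↔ ∀ i, b i = b e * A i e) := by
  classical
  have hsymA : Aᵀ = A := by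
    have h1 := hA.1
    rw [Matrix.IsHermitian] at h1
    ext i j
    have h2 := congrFun (congrFun h1 j) i
    simpa [Matrix.conjTranspose_apply] using h2.symm
  have hsymInv : (A⁻¹)ᵀ = A⁻¹ := by
    rw [Matrix.transpose_nonsing_inv, hsymA]
  have hdet : IsUnit A.det := hA.det_pos.ne'.isUnit
  set t := b e with ht
  set w : Fin k → ℝ := fun i => A i e with hw
  set u : Fin k → ℝ := b - t • w with hu
  have hAinv : A⁻¹.PosDef := hA.inv
  have hAAw : A⁻¹ *ᵥ w = Pi.single e 1 := by
    have h1 : w = A *ᵥ Pi.single e 1 := by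
      ext i
      rw [Matrix.mulVec_single]
      simp [hw]
    rw [h1, Matrix.mulVec_mulVec, Matrix.nonsing_inv_mul _ hdet, Matrix.one_mulVec]
  have hcross : w ⬝ᵥ (A⁻¹ *ᵥ b) = t := by
    rw [dot_symm' _ hsymInv, hAAw, dotProduct_single, mul_one]
  have key : u ⬝ᵥ (A⁻¹ *ᵥ u) = b ⬝ᵥ (A⁻¹ *ᵥ b) - t^2 := by
    rw [hu, Matrix.mulVec_sub, Matrix.mulVec_smul, hAAw, sub_dotProduct,
      dotProduct_sub, dotProduct_sub, smul_dotProduct,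
      smul_dotProduct, dotProduct_smul, dotProduct_smul,
      dotProduct_single, hcross]
    have hwe : w e = 1 := he
    simp only [smul_eq_mul, ← ht]
    rw [dotProduct_single, hwe]
    ring
  have hnn : 0 ≤ u ⬝ᵥ (A⁻¹ *ᵥ u) := by
    rcases eq_or_ne u 0 with h | h
    · simp [h]
    · have := hAinv.dotProduct_mulVec_pos h
      simpa using this.le
  refine ⟨by nlinarith, ?_, ?_⟩
  · intro h
    have h0 : u ⬝ᵥ (A⁻¹ *ᵥ u) = 0 := by rw [key, h]; ring
    have hu0 : u = 0 := by
      by_contra h'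
      have := hAinv.dotProduct_mulVec_pos h'
      simp only [star_trivial] at this
      linarith
    intro i
    have hi := congrFun hu0 i
    simp only [hu, Pi.sub_apply, Pi.smul_apply, smul_eq_mul, Pi.zero_apply] at hi
    have : b i = t * w i := by linarith
    simpa [hw] using this
  · intro h
    have hu0 : u = 0 := by
      funext i
      simp only [hu, Pi.sub_apply, Pi.smul_apply, smul_eq_mul, Pi.zero_apply]
      rw [h i]; simp [hw]
    have := key
    rw [hu0] at this
    simp only [zero_dotProduct] at this
    linarith

lemma markov_split {m : ℕ} (c : ℕ → ℕ → ℝ) (hcc : c m m = 1) :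
    (∀ k l : Fin (m+1+1), (k : ℕ) < (l : ℕ) →
        c (k : ℕ) (l : ℕ) = ∏ j ∈ Finset.Ico (k : ℕ) (l : ℕ), c j (j + 1)) ↔
    ((∀ k l : Fin (m+1), (k : ℕ) < (l : ℕ) →
        c (k : ℕ) (l : ℕ) = ∏ j ∈ Finset.Ico (k : ℕ) (l : ℕ), c j (j + 1)) ∧
      ∀ i : Fin (m+1), c (i : ℕ) (m+1) = c m (m+1) * c (i : ℕ) m) := by
  constructor
  · intro H
    constructor
    · intro k l hkl
      have := H ⟨k, by omega⟩ ⟨l, by omega⟩ (by simpa using hkl)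
      simpa using this
    · intro i
      have hi : (i : ℕ) ≤ m := by omega
      rcases lt_or_eq_of_le hi with h | h
      · have h1 := H ⟨i, by omega⟩ ⟨m+1, by omega⟩ (by simpa using by omega)
        have h2 := H ⟨i, by omega⟩ ⟨m, by omega⟩ (by simpa using h)
        simp only [Fin.val_mk] at h1 h2
        rw [h1, Finset.prod_Ico_succ_top hi, ← h2]
        ring
      · rw [h, hcc]; ring
  · rintro ⟨Hres, Hstep⟩ k l hkl
    have hl : (l : ℕ) ≤ m + 1 := by omega
    rcases lt_or_eq_of_le hl with h | h
    · have := Hres ⟨k, by omega⟩ ⟨l, by omega⟩ (by simpa using hkl)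
      simpa using this
    · rw [h]
      have hk : (k : ℕ) < m + 1 := by omega
      have hstep := Hstep ⟨k, hk⟩
      simp only [Fin.val_mk] at hstep
      rw [hstep, Finset.prod_Ico_succ_top (by omega : (k : ℕ) ≤ m)]
      have hckm : c (k : ℕ) m = ∏ j ∈ Finset.Ico (k : ℕ) m, c j (j + 1) := by
        rcases lt_or_eq_of_le (by omega : (k : ℕ) ≤ m) with h2 | h2
        · have := Hres ⟨k, by omega⟩ ⟨m, by omega⟩ (by simpa using h2)
          simpa using this
        · rw [h2, hcc, Finset.Ico_self, Finset.prod_empty]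
      rw [hckm]
      ring
lemma main_aux : ∀ (n : ℕ) (C : Matrix (Fin n) (Fin n) ℝ) (c : ℕ → ℕ → ℝ),
    (∀ i j : Fin n, C i j = c (i : ℕ) (j : ℕ)) → C.PosDef → (∀ i : Fin n, C i i = 1) →
    (C.det ≤ ∏ i ∈ Finset.range (n - 1), (1 - c i (i + 1) ^ 2) ∧
    (C.det = ∏ i ∈ Finset.range (n - 1), (1 - c i (i + 1) ^ 2) ↔
      ∀ k l : Fin n, (k : ℕ) < (l : ℕ) →
        c (k : ℕ) (l : ℕ) = ∏ j ∈ Finset.Ico (k : ℕ) (l : ℕ), c j (j + 1))) := by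
  intro n
  induction n with
  | zero =>
    intro C c hc hpd hdiag
    refine ⟨by simp [Matrix.det_fin_zero], ?_, ?_⟩
    · intro _ k
      exact k.elim0
    · intro _
      simp [Matrix.det_fin_zero]
  | succ m ih =>
    intro C c hc hpd hdiag
    cases m with
    | zero =>
      have hdet : C.det = 1 := by rw [Matrix.det_fin_one, hdiag]
      refine ⟨by simp [hdet, hdiag], ?_, ?_⟩
      · intro _ k l hkl
        have hk := k.isLt
        have hl := l.isLt
        omega
      · intro _
        simp [hdet, hdiag]
    | succ m =>
      -- n = m + 2
      set A := C.submatrix Fin.castSucc Fin.castSucc with hAdef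
      have hA : A.PosDef := posdef_castSucc hpd
      have hcA : ∀ i j : Fin (m+1), A i j = c (i : ℕ) (j : ℕ) := by
        intro i j
        rw [hAdef]
        simpa using hc i.castSucc j.castSucc
      have hdA : ∀ i : Fin (m+1), A i i = 1 := fun i => hdiag i.castSucc
      obtain ⟨ihle, ihiff⟩ := ih A c hcA hA hdA
      simp only [Nat.add_sub_cancel] at ihle ihiff ⊢
      set b : Fin (m+1) → ℝ := fun i => C i.castSucc (Fin.last (m+1)) with hbdef
      have hsym : Cᵀ = C := by
        have h1 := hpd.1
        ext i j
        have h2 := congrFun (congrFun h1 j) i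
        simpa [Matrix.conjTranspose_apply] using h2.symm
      have hdet : C.det = A.det * (1 - b ⬝ᵥ (A⁻¹ *ᵥ b)) := by
        have := det_split C hsym hA.det_pos.ne'.isUnit
        rwa [hdiag (Fin.last (m+1))] at this
      obtain ⟨hcs, hcseq⟩ := cs_step A hA b (Fin.last m) (hdA (Fin.last m))
      -- translate entries to c
      have hbe : b (Fin.last m) = c m (m+1) := by
        rw [hbdef]
        simpa using hc (Fin.last m).castSucc (Fin.last (m+1))
      have hbi : ∀ i : Fin (m+1), b i = c (i : ℕ) (m+1) := by
        intro i
        rw [hbdef]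
        simpa using hc i.castSucc (Fin.last (m+1))
      have hwi : ∀ i : Fin (m+1), A i (Fin.last m) = c (i : ℕ) m := by
        intro i
        rw [hcA]
        simp
      have hcc : c m m = 1 := by
        have := hdiag ⟨m, by omega⟩
        rw [hc] at this
        simpa using this
      -- positivity facts
      have hdetA : 0 < A.det := hA.det_pos
      have hdetC : 0 < C.det := hpd.det_pos
      have h1s : 0 < 1 - b ⬝ᵥ (A⁻¹ *ᵥ b) := by nlinarith [hdet]
      have h1t : 0 < 1 - c m (m+1) ^ 2 := by
        rw [← hbe]
        nlinarith
      have hle2 : 1 - b ⬝ᵥ (A⁻¹ *ᵥ b) ≤ 1 - c m (m+1) ^ 2 := by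
        rw [← hbe]
        nlinarith
      have hP : 0 < ∏ i ∈ Finset.range m, (1 - c i (i + 1) ^ 2) := lt_of_lt_of_le hdetA ihle
      have hprod : ∏ i ∈ Finset.range (m+1), (1 - c i (i + 1) ^ 2) =
          (∏ i ∈ Finset.range m, (1 - c i (i + 1) ^ 2)) * (1 - c m (m+1) ^ 2) :=
        Finset.prod_range_succ _ _
      constructor
      · rw [hdet, hprod]
        exact mul_le_mul ihle hle2 h1s.le hP.le
      · rw [hdet, hprod, mul_eq_mul_iff hdetA h1s ihle hle2, markov_split c hcc]
        refine and_congr ihiff ?_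
        rw [sub_right_inj, ← hbe, hcseq]
        constructor
        · intro h i
          have := h i
          rw [hbi i, hwi i] at this
          exact this
        · intro h i
          rw [hbi i, hwi i]
          exact h i

end Helpers

/-- For a correlation matrix `C` (symmetric positive definite with unit diagonal),
`det C ≤ ∏ (1 - C_{i,i+1}²)`, with equality iff `C` has the Markov product structure.
The function `c : ℕ → ℕ → ℝ` gives the entries of `C` over natural number indices. -/
theorem stmt3 (n : ℕ) (C : Matrix (Fin n) (Fin n) ℝ) (c : ℕ → ℕ → ℝ)
    (hc : ∀ i j : Fin n, C i j = c (i : ℕ) (j : ℕ))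
    (hpd : C.PosDef) (hdiag : ∀ i : Fin n, C i i = 1) :
    C.det ≤ ∏ i ∈ Finset.range (n - 1), (1 - c i (i + 1) ^ 2) ∧
    (C.det = ∏ i ∈ Finset.range (n - 1), (1 - c i (i + 1) ^ 2) ↔
      ∀ k l : Fin n, (k : ℕ) < (l : ℕ) →
        c (k : ℕ) (l : ℕ) = ∏ j ∈ Finset.Ico (k : ℕ) (l : ℕ), c j (j + 1)) := by
  exact main_aux n C c hc hpd hdiag
end

section
/- Let (e_1,...,e_n) be a basis of unit vectors in ℝ^n with dual basis (f_1,...,f_n) (i.e., ⟨f_i, e_j⟩ = δ_{ij}). If ⟨e_k, e_l⟩ = ∏_{j=k}^{l-1} ⟨e_j, e_{j+1}⟩ for all k < l, then ⟨f_i, f_j⟩ = 0 whenever |i - j| ≥ 2. -/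
open Finset RealInnerProductSpace

/-- If a basis `e_1,…,e_n` of unit vectors of `ℝ^n` has the Markov (multiplicative) inner
product structure, then the Gram matrix of the dual basis `f_1,…,f_n` is tridiagonal. -/
theorem stmt4 (n : ℕ) (e f : ℕ → EuclideanSpace ℝ (Fin n))
    (hunit : ∀ i, 1 ≤ i → i ≤ n → ‖e i‖ = 1)
    (hbasis : LinearIndependent ℝ (fun i : Fin n => e ((i : ℕ) + 1)))
    (hdual : ∀ i j, 1 ≤ i → i ≤ n → 1 ≤ j → j ≤ n →
      ⟪f i, e j⟫ = if i = j then (1 : ℝ) else 0)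
    (hmarkov : ∀ k l, 1 ≤ k → k < l → l ≤ n →
      ⟪e k, e l⟫ = ∏ j ∈ Finset.Ico k l, ⟪e j, e (j + 1)⟫) :
    ∀ i j, 1 ≤ i → i ≤ n → 1 ≤ j → j ≤ n → (i + 2 ≤ j ∨ j + 2 ≤ i) →
      ⟪f i, f j⟫ = 0 := by
  -- Gram matrix values, including diagonal
  have hG : ∀ k l, 1 ≤ k → k ≤ l → l ≤ n →
      ⟪e k, e l⟫ = ∏ m ∈ Finset.Ico k l, ⟪e m, e (m + 1)⟫ := by
    intro k l hk hkl hl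
    rcases eq_or_lt_of_le hkl with rfl | h
    · rw [Finset.Ico_self, Finset.prod_empty, real_inner_self_eq_norm_sq, hunit k hk hl,
        one_pow]
    · exact hmarkov k l hk h hl
  -- the squared inner product of consecutive vectors is not 1
  have hne : ∀ p, 1 ≤ p → p + 1 ≤ n → (1 : ℝ) - ⟪e p, e (p + 1)⟫ ^ 2 ≠ 0 := by
    intro p hp hpn h
    obtain ⟨q, rfl⟩ : ∃ q, p = q + 1 := ⟨p - 1, by omega⟩
    have hp1 : q < n := by omega
    have hp2 : q + 1 < n := by omega
    have hφinj : Function.Injective (![(⟨q, hp1⟩ : Fin n), ⟨q + 1, hp2⟩]) := by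
      rw [Function.Injective]
      simp only [Fin.forall_fin_two, Matrix.cons_val_zero, Matrix.cons_val_one,
        Matrix.head_cons, Fin.mk.injEq, Fin.ext_iff, Fin.val_zero, Fin.val_one]
      refine ⟨⟨fun h => h, fun h => ?_⟩, fun h => ?_, fun h => h⟩ <;> omega
    have h2 := hbasis.comp _ hφinj
    have h3 := (linearIndependent_fin2.mp h2).2
    have hep : ∀ a : ℝ, a • e (q + 1 + 1) ≠ e (q + 1) := by
      intro a ha
      have := h3 a
      simp only [Function.comp, Matrix.cons_val_one, Matrix.head_cons,
        Matrix.cons_val_zero] at this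
      exact this ha
    set p := q + 1 with hpdef
    have ht : ⟪e p, e (p + 1)⟫ = 1 ∨ ⟪e p, e (p + 1)⟫ = -1 := by
      have : (1 - ⟪e p, e (p + 1)⟫) * (1 + ⟪e p, e (p + 1)⟫) = 0 := by
        linear_combination h
      rcases mul_eq_zero.mp this with h' | h'
      · left; linarith
      · right; linarith
    have hnp : ‖e p‖ = 1 := hunit p hp (by omega)
    have hnp1 : ‖e (p + 1)‖ = 1 := hunit (p + 1) (by omega) hpn
    rcases ht with h' | h'
    · have : e p = e (p + 1) :=
        (inner_eq_one_iff_of_norm_eq_one (𝕜 := ℝ) hnp hnp1).mp h'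
      exact hep 1 (by rw [one_smul]; exact this.symm)
    · have h'' : ⟪e p, -(e (p + 1))⟫ = 1 := by rw [inner_neg_right]; linarith
      have : e p = -(e (p + 1)) :=
        (inner_eq_one_iff_of_norm_eq_one (𝕜 := ℝ) hnp (by rwa [norm_neg])).mp h''
      exact hep (-1) (by rw [neg_smul, one_smul]; exact this.symm)
  -- orthogonality relations
  have horth1 : ∀ p k, 1 ≤ k → k ≤ p → p + 1 ≤ n →
      ⟪e k, e (p + 1) - ⟪e p, e (p + 1)⟫ • e p⟫ = 0 := by
    intro p k hk hkp hpn
    rw [inner_sub_right, real_inner_smul_right,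
      hG k (p + 1) hk (by omega) hpn, hG k p hk hkp (by omega),
      Finset.prod_Ico_succ_top hkp]
    ring
  have horth2 : ∀ p k, 1 ≤ p → p + 1 ≤ k → k ≤ n →
      ⟪e k, e (p + 1) - ⟪e p, e (p + 1)⟫ • e p⟫ =
        (1 - ⟪e p, e (p + 1)⟫ ^ 2) * ∏ q ∈ Finset.Ico (p + 1) k, ⟪e q, e (q + 1)⟫ := by
    intro p k hp hpk hkn
    rw [inner_sub_right, real_inner_smul_right, real_inner_comm (e (p + 1)) (e k),
      real_inner_comm (e p) (e k),
      hG (p + 1) k (by omega) hpk hkn, hG p k hp (by omega) hkn,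
      Finset.prod_eq_prod_Ico_succ_bot (by omega : p < k)]
    ring
  -- key: zero vector criterion
  have key : ∀ i j, 1 ≤ i → i ≤ n → 1 ≤ j → j ≤ n → i + 2 ≤ j → ⟪f i, f j⟫ = 0 := by
    intro i j hi1 hin hj1 hjn hij
    have hn3 : 3 ≤ n := by omega
    haveI : Nonempty (Fin n) := ⟨⟨0, by omega⟩⟩
    have hcard : Fintype.card (Fin n) = Module.finrank ℝ (EuclideanSpace ℝ (Fin n)) := by
      simp
    let b : Module.Basis (Fin n) ℝ (EuclideanSpace ℝ (Fin n)) :=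
      basisOfLinearIndependentOfCardEqFinrank hbasis hcard
    have hb : ∀ k : Fin n, b k = e ((k : ℕ) + 1) := fun k => by
      simp [b, coe_basisOfLinearIndependentOfCardEqFinrank]
    have keyzero : ∀ w : EuclideanSpace ℝ (Fin n),
        (∀ k, 1 ≤ k → k ≤ n → ⟪e k, w⟫ = 0) → w = 0 := by
      intro w hw
      apply ext_inner_left ℝ
      intro v
      rw [inner_zero_right]
      conv_lhs => rw [← b.sum_repr v]
      rw [sum_inner]
      apply Finset.sum_eq_zero
      intro k _
      rw [real_inner_smul_left, hb k, hw ((k : ℕ) + 1) (by omega) (by omega)]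
      ring
    obtain ⟨m, rfl⟩ : ∃ m, j = m + 1 := ⟨j - 1, by omega⟩
    have hm2 : 2 ≤ m := by omega
    have him : i < m := by omega
    set t : ℕ → ℝ := fun p => ⟪e p, e (p + 1)⟫ with ht
    rcases eq_or_lt_of_le hjn with hje | hjlt
    · -- j = n : use v = e (m+1) - t m • e m
      set v : EuclideanSpace ℝ (Fin n) := e (m + 1) - t m • e m with hv
      have hveq : v - (1 - t m ^ 2) • f (m + 1) = 0 := by
        apply keyzero
        intro k hk1 hkn
        rw [inner_sub_right, real_inner_smul_right, real_inner_comm (f (m + 1)) (e k),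
          hdual (m + 1) k hj1 hjn hk1 hkn]
        rcases le_or_gt k m with hkm | hkm
        · rw [hv, horth1 m k hk1 hkm hjn, if_neg (by omega)]; ring
        · have hk : k = m + 1 := by omega
          subst hk
          rw [hv, horth2 m (m + 1) (by omega) le_rfl hjn, if_pos rfl,
            Finset.Ico_self, Finset.prod_empty]
          ring
      have hveq' : v = (1 - t m ^ 2) • f (m + 1) := by
        have := sub_eq_zero.mp hveq; exact this
      have h1 : ⟪f i, v⟫ = 0 := by
        rw [hv, inner_sub_right, real_inner_smul_right,
          hdual i (m + 1) hi1 hin hj1 hjn, hdual i m hi1 hin (by omega) (by omega),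
          if_neg (by omega), if_neg (by omega)]
        ring
      rw [hveq', real_inner_smul_right] at h1
      have := hne m (by omega) hjn
      rcases mul_eq_zero.mp h1 with h | h
      · exact absurd h this
      · exact h
    · -- j < n : use v with three terms
      have hm2n : m + 2 ≤ n := hjlt
      set v : EuclideanSpace ℝ (Fin n) :=
        (1 - t (m + 1) ^ 2) • (e (m + 1) - t m • e m) -
          (t (m + 1) * (1 - t m ^ 2)) • (e (m + 2) - t (m + 1) • e (m + 1)) with hv
      have hveq : v - ((1 - t m ^ 2) * (1 - t (m + 1) ^ 2)) • f (m + 1) = 0 := by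
        apply keyzero
        intro k hk1 hkn
        rw [inner_sub_right, real_inner_smul_right, real_inner_comm (f (m + 1)) (e k),
          hdual (m + 1) k hj1 hjn hk1 hkn, hv, inner_sub_right,
          real_inner_smul_right, real_inner_smul_right]
        rcases le_or_gt k m with hkm | hkm
        · rw [horth1 m k hk1 hkm (by omega), horth1 (m + 1) k hk1 (by omega) hm2n,
            if_neg (by omega)]
          ring
        · rcases eq_or_lt_of_le (Nat.succ_le_of_lt hkm) with hk | hk
          · have hk' : k = m + 1 := by omega
            subst hk'
            rw [horth2 m (m + 1) (by omega) le_rfl (by omega),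
              horth1 (m + 1) (m + 1) (by omega) le_rfl hm2n, if_pos rfl,
              Finset.Ico_self, Finset.prod_empty]
            ring
          · have hk2 : m + 2 ≤ k := by omega
            rw [horth2 m k (by omega) (by omega) hkn,
              horth2 (m + 1) k (by omega) hk2 hkn,
              Finset.prod_eq_prod_Ico_succ_bot (by omega : m + 1 < k),
              if_neg (by omega)]
            ring
      have hveq' : v = ((1 - t m ^ 2) * (1 - t (m + 1) ^ 2)) • f (m + 1) :=
        sub_eq_zero.mp hveq
      have h1 : ⟪f i, v⟫ = 0 := by
        rw [hv, inner_sub_right, real_inner_smul_right, real_inner_smul_right,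
          inner_sub_right, inner_sub_right, real_inner_smul_right, real_inner_smul_right,
          hdual i (m + 1) hi1 hin hj1 hjn, hdual i m hi1 hin (by omega) (by omega),
          hdual i (m + 2) hi1 hin (by omega) hm2n,
          if_neg (by omega), if_neg (by omega), if_neg (by omega)]
        ring
      rw [hveq', real_inner_smul_right] at h1
      have hA := hne m (by omega) (by omega)
      have hB := hne (m + 1) (by omega) hm2n
      rcases mul_eq_zero.mp h1 with h | h
      · exact absurd h (mul_ne_zero hA hB)
      · exact h
  intro i j hi1 hin hj1 hjn hij
  rcases hij with h | h
  · exact key i j hi1 hin hj1 hjn h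
  · rw [real_inner_comm]; exact key j i hj1 hjn hi1 hin h
end

section
/- Let (e_1,...,e_n) be a basis of unit vectors in ℝ^n with ⟨e_k, e_l⟩ = ∏_{j=k}^{l-1} ⟨e_j, e_{j+1}⟩ for all k < l, and assume |⟨e_i, e_{i+1}⟩| < 1 for all i. Then its dual basis satisfies f_i = β_{i-1} e_{i-1} + α_i e_i + β_i e_{i+1}, where α_i = (1 - ⟨e_{i-1},e_i⟩²⟨e_i,e_{i+1}⟩²)/((1-⟨e_{i-1},e_i⟩²)(1-⟨e_i,e_{i+1}⟩²)), β_i = -⟨e_i,e_{i+1}⟩/(1-⟨e_i,e_{i+1}⟩²), with the convention e_0 = e_{n+1} = 0 and the corresponding boundary terms omitted. -/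
open Finset RealInnerProductSpace

/-- For a basis `e_1,…,e_n` of unit vectors of `ℝ^n` with the Markov inner product structure,
the dual basis is `f_i = β_{i-1} e_{i-1} + α_i e_i + β_i e_{i+1}`, with the convention
`e_0 = e_{n+1} = 0` (so the boundary terms vanish automatically, since
`ρ_j = ⟪e_j, e_{j+1}⟫ = 0` for `j = 0` and `j = n`). -/
theorem stmt5 (n : ℕ) (hn : 1 ≤ n) (e f : ℕ → EuclideanSpace ℝ (Fin n)) (ρ : ℕ → ℝ)
    (hconv : ∀ j, j = 0 ∨ n < j → e j = 0)
    (hρ : ∀ j, ρ j = ⟪e j, e (j + 1)⟫)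
    (hunit : ∀ i, 1 ≤ i → i ≤ n → ‖e i‖ = 1)
    (hsmall : ∀ i, 1 ≤ i → i + 1 ≤ n → |ρ i| < 1)
    (hbasis : LinearIndependent ℝ (fun i : Fin n => e ((i : ℕ) + 1)))
    (hdual : ∀ i j, 1 ≤ i → i ≤ n → 1 ≤ j → j ≤ n →
      ⟪f i, e j⟫ = if i = j then (1 : ℝ) else 0)
    (hmarkov : ∀ k l, 1 ≤ k → k < l → l ≤ n →
      ⟪e k, e l⟫ = ∏ j ∈ Finset.Ico k l, ρ j) :
    ∀ i, 1 ≤ i → i ≤ n →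
      f i = (-ρ (i - 1) / (1 - ρ (i - 1) ^ 2)) • e (i - 1)
          + ((1 - ρ (i - 1) ^ 2 * ρ i ^ 2) / ((1 - ρ (i - 1) ^ 2) * (1 - ρ i ^ 2))) • e i
          + (-ρ i / (1 - ρ i ^ 2)) • e (i + 1) := by
  intro i hi1 hin
  -- notation
  set a := ρ (i - 1) with ha_def
  set b := ρ i with hb_def
  have hi' : i - 1 + 1 = i := Nat.succ_pred_eq_of_pos hi1
  have ha_inner : ⟪e (i-1), e i⟫ = a := by
    rw [ha_def, hρ, hi']
  have hb_inner : ⟪e i, e (i+1)⟫ = b := (hρ i).symm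
  -- squares less than 1
  have ha2 : a ^ 2 < 1 := by
    rcases Nat.lt_or_ge 1 i with h2 | h1
    · have := hsmall (i-1) (by omega) (by omega)
      nlinarith [this, abs_nonneg a, le_abs_self a, neg_abs_le a, sq_abs a]
    · have hi1' : i = 1 := by omega
      have : e (i-1) = 0 := hconv _ (Or.inl (by omega))
      have : a = 0 := by rw [← ha_inner, this, inner_zero_left]
      rw [this]; norm_num
  have hb2 : b ^ 2 < 1 := by
    rcases Nat.lt_or_ge i n with h2 | h1
    · have := hsmall i hi1 (by omega)
      nlinarith [this, abs_nonneg b, le_abs_self b, neg_abs_le b, sq_abs b]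
    · have : e (i+1) = 0 := hconv _ (Or.inr (by omega))
      have : b = 0 := by rw [← hb_inner, this, inner_zero_right]
      rw [this]; norm_num
  have ha0 : (1 : ℝ) - a ^ 2 ≠ 0 := by nlinarith
  have hb0 : (1 : ℝ) - b ^ 2 ≠ 0 := by nlinarith
  -- self inner products
  have hself : ∀ k, 1 ≤ k → k ≤ n → ⟪e k, e k⟫ = (1:ℝ) := by
    intro k h1 h2
    rw [real_inner_self_eq_norm_sq, hunit k h1 h2]; norm_num
  -- the basis
  haveI : Nonempty (Fin n) := ⟨⟨0, hn⟩⟩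
  have hcard : Fintype.card (Fin n) = Module.finrank ℝ (EuclideanSpace ℝ (Fin n)) := by
    simp [finrank_euclideanSpace]
  let bas : Module.Basis (Fin n) ℝ (EuclideanSpace ℝ (Fin n)) :=
    basisOfLinearIndependentOfCardEqFinrank hbasis hcard
  have hbas : ∀ k : Fin n, bas k = e ((k:ℕ) + 1) := fun k =>
    coe_basisOfLinearIndependentOfCardEqFinrank hbasis hcard ▸ rfl
  apply InnerProductSpace.ext_inner_right_basis (𝕜 := ℝ) bas
  intro k
  rw [hbas]
  set j : ℕ := (k : ℕ) + 1 with hj_def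
  have hj1 : 1 ≤ j := by omega
  have hjn : j ≤ n := by omega
  have hLHS := hdual i j hi1 hin hj1 hjn
  rw [hLHS]
  rw [inner_add_left, inner_add_left, real_inner_smul_left, real_inner_smul_left,
    real_inner_smul_left]
  rcases lt_trichotomy j i with hji | hji | hji
  · -- j < i, so i ≥ 2
    have h2i : 2 ≤ i := by omega
    set c : ℝ := ∏ m ∈ Finset.Ico j (i-1), ρ m with hc_def
    have h1 : ⟪e (i-1), e j⟫ = c := by
      rcases Nat.lt_or_ge j (i-1) with h | h
      · rw [real_inner_comm]; exact hmarkov j (i-1) hj1 h (by omega)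
      · have : j = i - 1 := by omega
        rw [this, hself (i-1) (by omega) (by omega), hc_def, this]
        simp
    have h2 : ⟪e i, e j⟫ = c * a := by
      rw [real_inner_comm, hmarkov j i hj1 hji hin]
      have : Finset.Ico j i = Finset.Ico j (i-1+1) := by rw [hi']
      rw [this, Finset.prod_Ico_succ_top (by omega)]
    have h3 : ⟪e (i+1), e j⟫ = c * a * b := by
      rcases Nat.lt_or_ge i n with h | h
      · rw [real_inner_comm, hmarkov j (i+1) hj1 (by omega) (by omega)]
        rw [Finset.prod_Ico_succ_top (by omega)]
        have : Finset.Ico j i = Finset.Ico j (i-1+1) := by rw [hi']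
        rw [this, Finset.prod_Ico_succ_top (by omega)]
      · have he : e (i+1) = 0 := hconv _ (Or.inr (by omega))
        have hb' : b = 0 := by
          rw [← hb_inner, he, inner_zero_right]
        rw [he, inner_zero_left, hb']; ring
    rw [h1, h2, h3, if_neg (by omega)]
    field_simp
    ring
  · -- j = i
    subst hji
    have h1 : ⟪e (j-1), e j⟫ = a := ha_inner
    have h2 : ⟪e j, e j⟫ = 1 := hself j hj1 hjn
    have h3 : ⟪e (j+1), e j⟫ = b := by rw [real_inner_comm]; exact hb_inner
    rw [h1, h2, h3, if_pos rfl]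
    field_simp
    ring
  · -- j > i
    set c : ℝ := ∏ m ∈ Finset.Ico (i+1) j, ρ m with hc_def
    have h1 : ⟪e (i+1), e j⟫ = c := by
      rcases Nat.lt_or_ge (i+1) j with h | h
      · exact hmarkov (i+1) j (by omega) h hjn
      · have : j = i + 1 := by omega
        rw [this, hself (i+1) (by omega) (by omega), hc_def, this]
        simp
    have h2 : ⟪e i, e j⟫ = b * c := by
      rw [hmarkov i j hi1 hji hjn, Finset.prod_eq_prod_Ico_succ_bot hji]
    have h3 : ⟪e (i-1), e j⟫ = a * (b * c) := by
      rcases Nat.lt_or_ge 1 i with h | h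
      · rw [hmarkov (i-1) j (by omega) (by omega) hjn,
          Finset.prod_eq_prod_Ico_succ_bot (show i-1 < j by omega), hi',
          Finset.prod_eq_prod_Ico_succ_bot hji]
      · have hi1' : i = 1 := by omega
        have he : e (i-1) = 0 := hconv _ (Or.inl (by omega))
        have ha' : a = 0 := by rw [← ha_inner, he, inner_zero_left]
        rw [he, inner_zero_left, ha']; ring
    rw [h1, h2, h3, if_neg (by omega)]
    field_simp
    ring
end

section
/- Let (e_1,...,e_n) be a basis of ℝ^n with dual basis (f_1,...,f_n), and suppose ⟨f_i, f_j⟩ = 0 whenever |i-j| ≥ 2. Let P_k denote the orthogonal projection onto span{e_1,...,e_k}. Then for every 1 ≤ k ≤ n-1, P_k e_{k+1} is a scalar multiple of e_k. -/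
open Finset RealInnerProductSpace

/-- If the Gram matrix of the dual basis `f_1,…,f_n` of a basis `e_1,…,e_n` of `ℝ^n` is
tridiagonal, then the orthogonal projection of `e_{k+1}` onto `span{e_1,…,e_k}` is a scalar
multiple of `e_k`. -/
theorem stmt6 (n : ℕ) (e f : ℕ → EuclideanSpace ℝ (Fin n))
    (hbasis : LinearIndependent ℝ (fun i : Fin n => e ((i : ℕ) + 1)))
    (hdual : ∀ i j, 1 ≤ i → i ≤ n → 1 ≤ j → j ≤ n →
      ⟪f i, e j⟫ = if i = j then (1 : ℝ) else 0)
    (htri : ∀ i j, 1 ≤ i → i ≤ n → 1 ≤ j → j ≤ n → (i + 2 ≤ j ∨ j + 2 ≤ i) →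
      ⟪f i, f j⟫ = 0) :
    ∀ k, 1 ≤ k → k ≤ n - 1 →
      ∃ a : ℝ, (Submodule.orthogonalProjectionOnto (Submodule.span ℝ (e '' Set.Icc 1 k)) (e (k + 1)) :
        EuclideanSpace ℝ (Fin n)) = a • e k := by
  intro k hk1 hk2
  have hn : k + 1 ≤ n := by
    rcases n with _ | m
    · omega
    · omega
  -- f₁,…,f_n is linearly independent
  have hF : LinearIndependent ℝ (fun i : Fin n => f ((i : ℕ) + 1)) := by
    rw [Fintype.linearIndependent_iff]
    intro c hc j
    have h0 : ⟪(∑ i : Fin n, c i • f ((i : ℕ) + 1)), e ((j : ℕ) + 1)⟫ = (0 : ℝ) := by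
      rw [hc, inner_zero_left]
    rw [sum_inner] at h0
    have key : ∀ i : Fin n, ⟪c i • f ((i : ℕ) + 1), e ((j : ℕ) + 1)⟫
        = if i = j then c i else 0 := by
      intro i
      rw [real_inner_smul_left,
        hdual _ _ (by omega) (by have := i.isLt; omega) (by omega) (by have := j.isLt; omega)]
      have : ((i : ℕ) + 1 = (j : ℕ) + 1) ↔ i = j := by
        constructor
        · intro h; exact Fin.ext (by omega)
        · intro h; rw [h]
      by_cases h : i = j <;> simp [this, h, Fin.val_inj]
    rw [Finset.sum_congr rfl (fun i _ => key i)] at h0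
    simpa using h0
  have hcard : Fintype.card (Fin n) = Module.finrank ℝ (EuclideanSpace ℝ (Fin n)) := by
    simp
  haveI : Nonempty (Fin n) := ⟨⟨0, by omega⟩⟩
  let B := basisOfLinearIndependentOfCardEqFinrank hF hcard
  have hB : ∀ i : Fin n, B i = f ((i : ℕ) + 1) := fun i =>
    congrFun (coe_basisOfLinearIndependentOfCardEqFinrank hF hcard) i
  set S := Submodule.span ℝ (e '' Set.Icc 1 k) with hS
  set p : EuclideanSpace ℝ (Fin n) := (Submodule.orthogonalProjectionOnto S (e (k + 1)) : EuclideanSpace ℝ (Fin n)) with hp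
  set w : EuclideanSpace ℝ (Fin n) := e (k + 1) - p with hw
  have hwmem : w ∈ Sᗮ := Submodule.sub_starProjection_mem_orthogonal _
  -- repr of w along B is ⟪w, e (j+1)⟫
  have hrepr : ∀ (v : EuclideanSpace ℝ (Fin n)) (j : Fin n),
      B.repr v j = ⟪v, e ((j : ℕ) + 1)⟫ := by
    intro v j
    conv_rhs => rw [← B.sum_repr v]
    rw [sum_inner]
    have key : ∀ i : Fin n, ⟪B.repr v i • B i, e ((j : ℕ) + 1)⟫
        = if i = j then B.repr v i else 0 := by
      intro i
      rw [real_inner_smul_left, hB,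
        hdual _ _ (by omega) (by have := i.isLt; omega) (by omega) (by have := j.isLt; omega)]
      have : ((i : ℕ) + 1 = (j : ℕ) + 1) ↔ i = j := by
        constructor
        · intro h; exact Fin.ext (by omega)
        · intro h; rw [h]
      by_cases h : i = j <;> simp [this, h, Fin.val_inj]
    rw [Finset.sum_congr rfl (fun i _ => key i)]
    simp
  have hrepr0 : ∀ j : Fin n, (j : ℕ) + 1 ≤ k → B.repr w j = 0 := by
    intro j hj
    rw [hrepr]
    have hmem : e ((j : ℕ) + 1) ∈ S := by
      apply Submodule.subset_span
      exact ⟨(j : ℕ) + 1, ⟨by omega, hj⟩, rfl⟩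
    have := (Submodule.mem_orthogonal S w).mp hwmem _ hmem
    rw [real_inner_comm] at this
    exact this
  -- ⟪f i, w⟫ = 0 for 1 ≤ i ≤ k - 1
  have hfw : ∀ i, 1 ≤ i → i ≤ k - 1 → ⟪f i, w⟫ = 0 := by
    intro i hi1 hi2
    conv_lhs => rw [← B.sum_repr w]
    rw [inner_sum]
    refine Finset.sum_eq_zero fun j _ => ?_
    rw [real_inner_smul_right, hB]
    by_cases hj : (j : ℕ) + 1 ≤ k
    · rw [hrepr0 j hj]; ring
    · rw [htri i ((j : ℕ) + 1) hi1 (by omega) (by omega) (by have := j.isLt; omega)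
        (Or.inl (by omega))]
      ring
  have hfp : ∀ i, 1 ≤ i → i ≤ k - 1 → ⟪f i, p⟫ = 0 := by
    intro i hi1 hi2
    have : p = e (k + 1) - w := by rw [hw, sub_sub_cancel]
    have b1 : i ≤ n := by omega
    have b2 : 1 ≤ k + 1 := by omega
    rw [this, inner_sub_right, hfw i hi1 hi2, hdual i (k + 1) hi1 b1 b2 hn]
    have : ¬ (i = k + 1) := by omega
    simp [this]
  -- p lies in the span, write it as a combination
  have hpS : p ∈ S := (Submodule.orthogonalProjectionOnto S (e (k + 1))).2
  have hset : e '' Set.Icc 1 k = Set.range (fun i : Fin k => e ((i : ℕ) + 1)) := by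
    ext x
    constructor
    · rintro ⟨m, ⟨hm1, hm2⟩, rfl⟩
      have hmk : m - 1 < k := by omega
      refine ⟨⟨m - 1, hmk⟩, ?_⟩
      have hm : m - 1 + 1 = m := by omega
      show e (m - 1 + 1) = e m
      rw [hm]
    · rintro ⟨i, rfl⟩
      exact ⟨(i : ℕ) + 1, ⟨by omega, by have := i.isLt; omega⟩, rfl⟩
  rw [hS, hset, Submodule.mem_span_range_iff_exists_fun] at hpS
  obtain ⟨c, hc⟩ := hpS
  -- c j = ⟪f (j+1), p⟫
  have hcval : ∀ j : Fin k, c j = ⟪f ((j : ℕ) + 1), p⟫ := by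
    intro j
    conv_rhs => rw [← hc]
    rw [inner_sum]
    have key : ∀ i : Fin k, ⟪f ((j : ℕ) + 1), c i • e ((i : ℕ) + 1)⟫
        = if i = j then c i else 0 := by
      intro i
      rw [real_inner_smul_right,
        hdual _ _ (by omega) (by have := j.isLt; omega) (by omega) (by have := i.isLt; omega)]
      have : ((j : ℕ) + 1 = (i : ℕ) + 1) ↔ i = j := by
        constructor
        · intro h; exact Fin.ext (by omega)
        · intro h; rw [h]
      by_cases h : i = j <;> simp [this, h, Fin.val_inj, @eq_comm _ j i]
    rw [Finset.sum_congr rfl (fun i _ => key i)]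
    simp
  have hczero : ∀ j : Fin k, (j : ℕ) + 1 ≤ k - 1 → c j = 0 := by
    intro j hj
    rw [hcval]
    exact hfp _ (by omega) hj
  have hkk : k - 1 < k := by omega
  refine ⟨c ⟨k - 1, hkk⟩, ?_⟩
  have hval : ((⟨k - 1, hkk⟩ : Fin k) : ℕ) + 1 = k := by
    show k - 1 + 1 = k
    omega
  rw [← hc, Finset.sum_eq_single (⟨k - 1, hkk⟩ : Fin k)]
  · rw [hval]
  · intro j _ hj
    have hjv : (j : ℕ) + 1 ≤ k - 1 := by
      have h1 := j.isLt
      have h2 : (j : ℕ) ≠ k - 1 := fun h => hj (Fin.ext (by simpa using h))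
      omega
    rw [hczero j hjv, zero_smul]
  · intro h
    exact absurd (Finset.mem_univ _) h
end

section
/- Let (e_1,...,e_n) be a basis of unit vectors in ℝ^n and P_k the orthogonal projection onto span{e_1,...,e_k}. If for every 1 ≤ k ≤ n-1 the vector P_k e_{k+1} is parallel to e_k, then ⟨e_k, e_l⟩ = ∏_{j=k}^{l-1} ⟨e_j, e_{j+1}⟩ for all 1 ≤ k < l ≤ n. -/
open Finset RealInnerProductSpace

/-- If for a basis `e_1,…,e_n` of unit vectors of `ℝ^n` each orthogonal projection of `e_{k+1}`
onto `span{e_1,…,e_k}` is parallel to `e_k`, then the inner products have the Markov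
multiplicative structure. -/
theorem stmt7 (n : ℕ) (e : ℕ → EuclideanSpace ℝ (Fin n))
    (hunit : ∀ i, 1 ≤ i → i ≤ n → ‖e i‖ = 1)
    (hbasis : LinearIndependent ℝ (fun i : Fin n => e ((i : ℕ) + 1)))
    (hproj : ∀ k, 1 ≤ k → k ≤ n - 1 →
      ∃ a : ℝ, (Submodule.orthogonalProjectionOnto (Submodule.span ℝ (e '' Set.Icc 1 k)) (e (k + 1)) :
        EuclideanSpace ℝ (Fin n)) = a • e k) :
    ∀ k l, 1 ≤ k → k < l → l ≤ n →
      ⟪e k, e l⟫ = ∏ j ∈ Finset.Ico k l, ⟪e j, e (j + 1)⟫ := by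
  intro k l hk1
  induction l with
  | zero => omega
  | succ l ih =>
    intro hkl hln
    obtain ⟨a, ha⟩ := hproj l (by omega) (by omega)
    have hkey : ∀ j, 1 ≤ j → j ≤ l → ⟪e j, e (l + 1)⟫ = a * ⟪e j, e l⟫ := by
      intro j hj1 hjl
      have hmem : e j ∈ Submodule.span ℝ (e '' Set.Icc 1 l) :=
        Submodule.subset_span ⟨j, ⟨hj1, hjl⟩, rfl⟩
      have h0 := Submodule.starProjection_inner_eq_zero (e (l + 1)) (e j) hmem
      rw [Submodule.starProjection_apply] at h0
      rw [inner_sub_left, sub_eq_zero, ha] at h0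
      rw [real_inner_comm, h0, real_inner_smul_left, real_inner_comm]
    have hll : ⟪e l, e (l + 1)⟫ = a := by
      have h1 : ‖e l‖ = 1 := hunit l (by omega) (by omega)
      rw [hkey l (by omega) le_rfl, real_inner_self_eq_norm_sq, h1]
      ring
    rcases eq_or_lt_of_le (Nat.lt_succ_iff.mp hkl) with h | h
    · subst h
      rw [Finset.prod_Ico_succ_top le_rfl, Finset.Ico_self, Finset.prod_empty, one_mul]
    · rw [hkey k hk1 (by omega), ih h (by omega),
        Finset.prod_Ico_succ_top (by omega : k ≤ l), hll]
      ring
end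

section
/- Let (e_1,...,e_n) be a basis of unit vectors in ℝ^n, P_k the orthogonal projection onto S_k = span{e_1,...,e_k}, and T_m = span{e_{n-m+1},...,e_n}. If for every 1 ≤ k ≤ n-1 and every v ∈ T_{n-k} one has P_k v equal to the orthogonal projection of v onto the line spanned by e_k, then for every 1 ≤ k ≤ n-1, P_k e_{k+1} is parallel to e_k. Conversely, if P_k e_{k+1} is parallel to e_k for all k, then P_k v equals the projection of v onto span{e_k} for every v ∈ T_{n-k}. -/
open Finset RealInnerProductSpace

/-- For a basis `e_1,…,e_n` of unit vectors of `ℝ^n`, with `S_k = span{e_1,…,e_k}`,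
`T_m = span{e_{n-m+1},…,e_n}` and `M_k = span{e_k}`: the projections `P_k` and `M_k` agree on
`T_{n-k}` for all `1 ≤ k ≤ n-1` if and only if `P_k e_{k+1}` is parallel to `e_k` for all
`1 ≤ k ≤ n-1`. -/
theorem stmt8 (n : ℕ) (e : ℕ → EuclideanSpace ℝ (Fin n))
    (hunit : ∀ i, 1 ≤ i → i ≤ n → ‖e i‖ = 1)
    (hbasis : LinearIndependent ℝ (fun i : Fin n => e ((i : ℕ) + 1))) :
    (∀ k, 1 ≤ k → k ≤ n - 1 →
      ∀ v ∈ Submodule.span ℝ (e '' Set.Icc (k + 1) n),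
        (Submodule.orthogonalProjection (Submodule.span ℝ (e '' Set.Icc 1 k)) v :
            EuclideanSpace ℝ (Fin n)) =
          (Submodule.orthogonalProjection (Submodule.span ℝ {e k}) v : EuclideanSpace ℝ (Fin n)))
    ↔
    (∀ k, 1 ≤ k → k ≤ n - 1 →
      ∃ a : ℝ, (Submodule.orthogonalProjection (Submodule.span ℝ (e '' Set.Icc 1 k)) (e (k + 1)) :
        EuclideanSpace ℝ (Fin n)) = a • e k) := by
  constructor
  · intro h k hk1 hk2
    have hkn : k + 1 ≤ n := by omega
    have he : e (k + 1) ∈ Submodule.span ℝ (e '' Set.Icc (k + 1) n) :=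
      Submodule.subset_span ⟨k + 1, ⟨le_refl _, hkn⟩, rfl⟩
    have h' := h k hk1 hk2 _ he
    refine ⟨⟪e k, e (k + 1)⟫ / ‖e k‖ ^ 2, ?_⟩
    rw [h']
    exact (Submodule.starProjection_singleton ℝ (e (k + 1))).trans (by norm_num)
  · intro h k hk1 hk2 v hv
    set K := Submodule.span ℝ (e '' Set.Icc 1 k) with hK
    set L := Submodule.span ℝ {e k} with hL
    have hLK : L ≤ K := by
      rw [hL, Submodule.span_le, Set.singleton_subset_iff]
      exact Submodule.subset_span ⟨k, ⟨hk1, le_refl _⟩, rfl⟩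
    -- Claim: P_k (e j) is a multiple of e k for all j ∈ [k+1, n]
    have claim : ∀ j, k + 1 ≤ j → j ≤ n →
        ∃ c : ℝ, (Submodule.orthogonalProjection K (e j) : EuclideanSpace ℝ (Fin n)) = c • e k := by
      intro j hj
      induction j, hj using Nat.le_induction with
      | base => exact fun _ => h k hk1 hk2
      | succ j hj ih =>
        intro hjn
        obtain ⟨c, hc⟩ := ih (by omega)
        obtain ⟨a, ha⟩ := h j (by omega) (by omega)
        have hle : K ≤ Submodule.span ℝ (e '' Set.Icc 1 j) := by
          refine Submodule.span_mono (Set.image_mono ?_)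
          exact Set.Icc_subset_Icc_right (by omega)
        have key := Submodule.orthogonalProjectionOnto_starProjection_of_le hle (e (j + 1))
        refine ⟨a * c, ?_⟩
        calc (Submodule.orthogonalProjection K (e (j + 1)) : EuclideanSpace ℝ (Fin n))
            = (Submodule.orthogonalProjection K
                ((Submodule.orthogonalProjection (Submodule.span ℝ (e '' Set.Icc 1 j)) (e (j + 1)) :
                  EuclideanSpace ℝ (Fin n))) : EuclideanSpace ℝ (Fin n)) :=
                congrArg (fun x : K => (x : EuclideanSpace ℝ (Fin n))) key.symm
          _ = (Submodule.orthogonalProjection K (a • e j) : EuclideanSpace ℝ (Fin n)) := by rw [ha]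
          _ = a • (Submodule.orthogonalProjection K (e j) : EuclideanSpace ℝ (Fin n)) := by
              rw [map_smul]; rfl
          _ = (a * c) • e k := by rw [hc, smul_smul]
    -- For the generators, the two projections agree
    have hgen : ∀ x ∈ e '' Set.Icc (k + 1) n,
        (Submodule.orthogonalProjection K x : EuclideanSpace ℝ (Fin n)) =
          (Submodule.orthogonalProjection L x : EuclideanSpace ℝ (Fin n)) := by
      rintro x ⟨j, ⟨hj1, hj2⟩, rfl⟩
      obtain ⟨c, hc⟩ := claim j hj1 hj2
      have hmem : (Submodule.orthogonalProjection K (e j) : EuclideanSpace ℝ (Fin n)) ∈ L := by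
        rw [hc]; exact Submodule.smul_mem _ _ (Submodule.mem_span_singleton_self _)
      have h1 : e j - (Submodule.orthogonalProjection K (e j) : EuclideanSpace ℝ (Fin n)) ∈ Lᗮ :=
        Submodule.orthogonal_le hLK (Submodule.sub_starProjection_mem_orthogonal (K := K) (e j))
      have h2 : Submodule.orthogonalProjection L _ = 0 :=
        Submodule.orthogonalProjectionOnto_apply_of_mem_orthogonal h1
      have h3 : Submodule.orthogonalProjection L (e j) =
          Submodule.orthogonalProjection L (Submodule.orthogonalProjection K (e j) : EuclideanSpace ℝ (Fin n)) := by
        have := map_sub (Submodule.orthogonalProjection L) (e j)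
          ((Submodule.orthogonalProjection K (e j) : EuclideanSpace ℝ (Fin n)))
        rw [h2] at this
        exact sub_eq_zero.mp this.symm
      have h4 : (Submodule.orthogonalProjection L
          ((Submodule.orthogonalProjection K (e j) : EuclideanSpace ℝ (Fin n))) :
            EuclideanSpace ℝ (Fin n)) =
          (Submodule.orthogonalProjection K (e j) : EuclideanSpace ℝ (Fin n)) :=
        Submodule.starProjection_eq_self_iff.mpr hmem
      rw [h3, h4]
    refine Submodule.span_induction (p := fun x _ =>
        (Submodule.orthogonalProjection K x : EuclideanSpace ℝ (Fin n)) =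
          (Submodule.orthogonalProjection L x : EuclideanSpace ℝ (Fin n)))
      (fun x hx => hgen x hx) (by simp) ?_ ?_ hv
    · intro x y _ _ hx hy
      simp only [map_add, Submodule.coe_add, hx, hy]
    · intro a x _ hx
      simp only [map_smul, Submodule.coe_smul, hx]
end

section
/- Let (e_1,...,e_n) be a basis of unit vectors in ℝ^n, M_k the orthogonal projection onto span{e_k}, and M_k' = I - M_k. Suppose for every 1 ≤ k ≤ n-1 the orthogonal projection of e_{k+1} onto span{e_1,...,e_k} is parallel to e_k. Then for every 2 ≤ k ≤ n-1 the subspaces M_k'(span{e_1,...,e_{k-1}}) and M_k'(span{e_{k+1},...,e_n}) are orthogonal. -/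
open Finset RealInnerProductSpace

/-- If for a basis `e_1,…,e_n` of unit vectors of `ℝ^n` each projection of `e_{k+1}` onto
`span{e_1,…,e_k}` is parallel to `e_k`, then for `2 ≤ k ≤ n-1` the images under
`M_k' = orthogonal projection onto (span{e_k})ᗮ` of `span{e_1,…,e_{k-1}}` and of
`span{e_{k+1},…,e_n}` are orthogonal. -/
theorem stmt9 (n : ℕ) (e : ℕ → EuclideanSpace ℝ (Fin n))
    (hunit : ∀ i, 1 ≤ i → i ≤ n → ‖e i‖ = 1)
    (hbasis : LinearIndependent ℝ (fun i : Fin n => e ((i : ℕ) + 1)))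
    (hproj : ∀ k, 1 ≤ k → k ≤ n - 1 →
      ∃ a : ℝ, (Submodule.orthogonalProjectionOnto (Submodule.span ℝ (e '' Set.Icc 1 k)) (e (k + 1)) :
        EuclideanSpace ℝ (Fin n)) = a • e k) :
    ∀ k, 2 ≤ k → k ≤ n - 1 →
      ∀ u ∈ Submodule.span ℝ (e '' Set.Icc 1 (k - 1)),
      ∀ w ∈ Submodule.span ℝ (e '' Set.Icc (k + 1) n),
        ⟪(Submodule.orthogonalProjectionOnto (Submodule.span ℝ {e k})ᗮ u : EuclideanSpace ℝ (Fin n)),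
         (Submodule.orthogonalProjectionOnto (Submodule.span ℝ {e k})ᗮ w : EuclideanSpace ℝ (Fin n))⟫ = 0 := by
  intro k hk2 hkn u hu w hw
  have hn : 3 ≤ n := by omega
  have hek : ‖e k‖ = 1 := hunit k (by omega) (by omega)
  -- key: for m < j ≤ n, the projection of e j onto span{e 1,…,e m} is a multiple of e m
  have key : ∀ d m : ℕ, 1 ≤ m → m + 1 + d ≤ n → ∃ c : ℝ,
      (Submodule.orthogonalProjectionOnto (Submodule.span ℝ (e '' Set.Icc 1 m)) (e (m + 1 + d)) :
        EuclideanSpace ℝ (Fin n)) = c • e m := by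
    intro d
    induction d with
    | zero => intro m h1 h2; exact hproj m h1 (by omega)
    | succ d ih =>
      intro m h1 h2
      obtain ⟨c, hc⟩ := ih (m + 1) (by omega) (by omega)
      obtain ⟨a, ha⟩ := hproj m h1 (by omega)
      refine ⟨c * a, ?_⟩
      have hle : Submodule.span ℝ (e '' Set.Icc 1 m) ≤
          Submodule.span ℝ (e '' Set.Icc 1 (m + 1)) :=
        Submodule.span_mono (Set.image_mono (Set.Icc_subset_Icc_right (by omega)))
      have hcomp := Submodule.orthogonalProjectionOnto_starProjection_of_le hle (e (m + 1 + (d + 1)))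
      have hc' : (Submodule.orthogonalProjectionOnto (Submodule.span ℝ (e '' Set.Icc 1 (m + 1)))
          (e (m + 1 + (d + 1))) : EuclideanSpace ℝ (Fin n)) = c • e (m + 1) := by
        rw [show m + 1 + (d + 1) = m + 1 + 1 + d by omega]; exact hc
      calc (Submodule.orthogonalProjectionOnto (Submodule.span ℝ (e '' Set.Icc 1 m))
            (e (m + 1 + (d + 1))) : EuclideanSpace ℝ (Fin n))
          = (Submodule.orthogonalProjectionOnto (Submodule.span ℝ (e '' Set.Icc 1 m))
            ((Submodule.orthogonalProjectionOnto (Submodule.span ℝ (e '' Set.Icc 1 (m + 1)))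
              (e (m + 1 + (d + 1)))) : EuclideanSpace ℝ (Fin n)) :
              EuclideanSpace ℝ (Fin n)) := by exact congrArg Subtype.val hcomp.symm
        _ = (Submodule.orthogonalProjectionOnto (Submodule.span ℝ (e '' Set.Icc 1 m))
              (c • e (m + 1)) : EuclideanSpace ℝ (Fin n)) := by rw [hc']
        _ = c • (Submodule.orthogonalProjectionOnto (Submodule.span ℝ (e '' Set.Icc 1 m))
              (e (m + 1)) : EuclideanSpace ℝ (Fin n)) := by
              rw [map_smul]; rfl
        _ = (c * a) • e m := by rw [ha, smul_smul]
  -- membership facts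
  have hekmem : e k ∈ Submodule.span ℝ (e '' Set.Icc 1 k) :=
    Submodule.subset_span ⟨k, ⟨by omega, le_rfl⟩, rfl⟩
  have humem : u ∈ Submodule.span ℝ (e '' Set.Icc 1 k) :=
    Submodule.span_mono (Set.image_mono (Set.Icc_subset_Icc_right (by omega))) hu
  -- the crucial inner product identity on generators, extended by linearity
  have claim : ⟪u, w⟫ = ⟪e k, u⟫ * ⟪e k, w⟫ := by
    induction hw using Submodule.span_induction with
    | mem x hx =>
      obtain ⟨j, ⟨hj1, hj2⟩, rfl⟩ := hx
      obtain ⟨c, hc⟩ := key (j - (k + 1)) k (by omega) (by omega)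
      rw [show k + 1 + (j - (k + 1)) = j by omega] at hc
      have horth := Submodule.sub_starProjection_mem_orthogonal
        (K := Submodule.span ℝ (e '' Set.Icc 1 k)) (e j)
      have h1 : ⟪e k, e j⟫ = c := by
        have := (Submodule.mem_orthogonal _ _).1 horth (e k) hekmem
        rw [inner_sub_right, sub_eq_zero] at this
        rw [this, Submodule.starProjection_apply, hc, real_inner_smul_right, real_inner_self_eq_norm_sq, hek]
        ring
      have h2 : ⟪u, e j⟫ = c * ⟪u, e k⟫ := by
        have := (Submodule.mem_orthogonal _ _).1 horth u humem
        rw [inner_sub_right, sub_eq_zero] at this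
        rw [this, Submodule.starProjection_apply, hc, real_inner_smul_right]
      rw [h2, h1, real_inner_comm u (e k)]; ring
    | zero => simp
    | add x y hx hy ihx ihy => rw [inner_add_right, inner_add_right, ihx, ihy]; ring
    | smul a x hx ihx =>
      rw [real_inner_smul_right, real_inner_smul_right, ihx]; ring
  -- now compute the projections onto (span {e k})ᗮ explicitly
  have proj_eq : ∀ v : EuclideanSpace ℝ (Fin n),
      (Submodule.orthogonalProjectionOnto (Submodule.span ℝ {e k})ᗮ v : EuclideanSpace ℝ (Fin n)) =
        v - ⟪e k, v⟫ • e k := by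
    intro v
    rw [← Submodule.starProjection_apply, Submodule.starProjection_orthogonal_val, Submodule.starProjection_singleton, hek]
    norm_num
  rw [proj_eq u, proj_eq w]
  rw [inner_sub_left, inner_sub_right, inner_sub_right, real_inner_smul_left,
    real_inner_smul_left, real_inner_smul_right, real_inner_smul_right,
    real_inner_self_eq_norm_sq, hek, claim, real_inner_comm (e k) u]
  ring
end

section
/- Let (e_1,...,e_n) be a basis of unit vectors in ℝ^n, M_k' the orthogonal projection onto the orthogonal complement of span{e_k}, and suppose for every 2 ≤ k ≤ n-1 the subspaces M_k'(span{e_1,...,e_{k-1}}) and M_k'(span{e_{k+1},...,e_n}) are orthogonal. Then for every 1 ≤ k ≤ n-1 and every v ∈ span{e_{k+1},...,e_n}, the orthogonal projection of v onto span{e_1,...,e_k} equals the orthogonal projection of v onto span{e_k}. -/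
open Finset RealInnerProductSpace

/-- If for a basis `e_1,…,e_n` of unit vectors of `ℝ^n` and every `2 ≤ k ≤ n-1` the images under
`M_k' = orthogonal projection onto (span{e_k})ᗮ` of `span{e_1,…,e_{k-1}}` and of
`span{e_{k+1},…,e_n}` are orthogonal, then for every `1 ≤ k ≤ n-1` and every
`v ∈ span{e_{k+1},…,e_n}` the projection of `v` onto `span{e_1,…,e_k}` equals the projection of
`v` onto `span{e_k}`. -/
theorem stmt10 (n : ℕ) (e : ℕ → EuclideanSpace ℝ (Fin n))
    (hunit : ∀ i, 1 ≤ i → i ≤ n → ‖e i‖ = 1)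
    (hbasis : LinearIndependent ℝ (fun i : Fin n => e ((i : ℕ) + 1)))
    (horth : ∀ k, 2 ≤ k → k ≤ n - 1 →
      ∀ u ∈ Submodule.span ℝ (e '' Set.Icc 1 (k - 1)),
      ∀ w ∈ Submodule.span ℝ (e '' Set.Icc (k + 1) n),
        ⟪(Submodule.orthogonalProjectionOnto (Submodule.span ℝ {e k})ᗮ u : EuclideanSpace ℝ (Fin n)),
         (Submodule.orthogonalProjectionOnto (Submodule.span ℝ {e k})ᗮ w : EuclideanSpace ℝ (Fin n))⟫ = 0) :
    ∀ k, 1 ≤ k → k ≤ n - 1 →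
      ∀ v ∈ Submodule.span ℝ (e '' Set.Icc (k + 1) n),
        (Submodule.orthogonalProjectionOnto (Submodule.span ℝ (e '' Set.Icc 1 k)) v :
            EuclideanSpace ℝ (Fin n)) =
          (Submodule.orthogonalProjectionOnto (Submodule.span ℝ {e k}) v : EuclideanSpace ℝ (Fin n)) := by
  intro k hk1 hkn v hv
  have hn2 : 2 ≤ n := by omega
  have hkln : k ≤ n := by omega
  have hek : ‖e k‖ = 1 := hunit k hk1 hkln
  -- formula for projection onto the line
  have hproj : (Submodule.orthogonalProjectionOnto (Submodule.span ℝ {e k}) v : EuclideanSpace ℝ (Fin n))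
      = ⟪e k, v⟫ • e k := by
    change (Submodule.span ℝ {e k}).starProjection v = _
    rw [Submodule.starProjection_singleton, hek]
    norm_num
  rw [hproj]
  change (Submodule.span ℝ (e '' Set.Icc 1 k)).starProjection v = _
  apply Submodule.eq_starProjection_of_mem_of_inner_eq_zero
  · exact Submodule.smul_mem _ _ (Submodule.subset_span
      ⟨k, ⟨hk1, le_refl k⟩, rfl⟩)
  · intro w hw
    -- reduce to generators
    induction hw using Submodule.span_induction with
    | mem x hx =>
      obtain ⟨i, ⟨hi1, hik⟩, rfl⟩ := hx
      -- need ⟪v - ⟪e k, v⟫ • e k, e i⟫ = 0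
      rcases eq_or_lt_of_le hik with heq | hlt
      · subst heq
        rw [inner_sub_left, real_inner_smul_left, real_inner_self_eq_norm_sq, hek, real_inner_comm]
        ring
      · -- i < k, so k ≥ 2
        have hk2 : 2 ≤ k := by omega
        have hei : e i ∈ Submodule.span ℝ (e '' Set.Icc 1 (k - 1)) :=
          Submodule.subset_span ⟨i, ⟨hi1, by omega⟩, rfl⟩
        have key := horth k hk2 hkn (e i) hei v hv
        change ⟪(Submodule.span ℝ {e k})ᗮ.starProjection (e i),
          (Submodule.span ℝ {e k})ᗮ.starProjection v⟫ = 0 at key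
        rw [Submodule.starProjection_orthogonal_val, Submodule.starProjection_orthogonal_val] at key
        change ⟪e i - ((Submodule.span ℝ {e k}).orthogonalProjectionOnto (e i) : EuclideanSpace ℝ (Fin n)),
          v - ((Submodule.span ℝ {e k}).orthogonalProjectionOnto v : EuclideanSpace ℝ (Fin n))⟫ = 0 at key
        rw [hproj] at key
        have hproji : (Submodule.orthogonalProjectionOnto (Submodule.span ℝ {e k}) (e i) :
            EuclideanSpace ℝ (Fin n)) = ⟪e k, e i⟫ • e k := by
          change (Submodule.span ℝ {e k}).starProjection (e i) = _
          rw [Submodule.starProjection_singleton, hek]; norm_num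
        rw [hproji] at key
        have hsq : ⟪e k, e k⟫ = (1:ℝ) := by
          rw [real_inner_self_eq_norm_sq, hek]; norm_num
        simp only [inner_sub_left, inner_sub_right, real_inner_smul_left,
          real_inner_smul_right, hsq] at key
        simp only [inner_sub_left, real_inner_smul_left]
        linear_combination key - real_inner_comm v (e i) -
          (inner ℝ (e k) v : ℝ) * real_inner_comm (e i) (e k)
    | zero => simp
    | add x y hx hy ihx ihy => rw [inner_add_right, ihx, ihy]; ring
    | smul a x hx ih => rw [inner_smul_right, ih]; ring
end

section
/- Among all symmetric positive definite n×n matrices C with prescribed diagonal entries c_{ii} = σ_i² > 0 and prescribed first off-diagonal entries c_{i,i+1} = σ_i σ_{i+1} ρ_i with |ρ_i| < 1, the determinant det C is uniquely maximized, and the maximum value is (∏_{i=1}^n σ_i²) · ∏_{i=1}^{n-1}(1-ρ_i²), attained exactly when c_{kl} = σ_k σ_l ∏_{j=k}^{l-1} ρ_j for all k < l. -/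
open Finset Matrix

private lemma dot_mulVec_symm {m : Type*} [Fintype m] (S : Matrix m m ℝ)
    (hS : ∀ i j, S i j = S j i) (u w : m → ℝ) :
    (S *ᵥ u) ⬝ᵥ w = u ⬝ᵥ (S *ᵥ w) := by
  simp only [Matrix.mulVec, dotProduct, Finset.sum_mul, Finset.mul_sum]
  rw [Finset.sum_comm]
  exact Finset.sum_congr rfl fun i _ => Finset.sum_congr rfl fun j _ => by rw [hS]; ring

private theorem aux : ∀ (n : ℕ) (σ ρ : ℕ → ℝ),
    (∀ i, i < n → 0 < σ i) → (∀ i, i + 1 < n → |ρ i| < 1) →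
    ∀ (C : Matrix (Fin n) (Fin n) ℝ), C.PosDef →
    (∀ i : Fin n, C i i = σ (i : ℕ) ^ 2) →
    (∀ (i : Fin n) (h : (i : ℕ) + 1 < n),
      C i ⟨(i : ℕ) + 1, h⟩ = σ (i : ℕ) * σ ((i : ℕ) + 1) * ρ (i : ℕ)) →
    C.det ≤ (∏ i ∈ Finset.range n, σ i ^ 2) * ∏ i ∈ Finset.range (n - 1), (1 - ρ i ^ 2) ∧
    (C.det = (∏ i ∈ Finset.range n, σ i ^ 2) * ∏ i ∈ Finset.range (n - 1), (1 - ρ i ^ 2) ↔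
      ∀ k l : Fin n, (k : ℕ) < (l : ℕ) →
        C k l = σ (k : ℕ) * σ (l : ℕ) * ∏ j ∈ Finset.Ico (k : ℕ) (l : ℕ), ρ j) := by
  intro n
  induction n with
  | zero =>
    intro σ ρ hσ hρ C hC hdiag hoff
    simp [Matrix.det_isEmpty]
  | succ m ih =>
    rcases m with _ | k
    · intro σ ρ hσ hρ C hC hdiag hoff
      have h1 : C.det = σ 0 ^ 2 := by
        rw [Matrix.det_fin_one]
        simpa using hdiag 0
      have h2 : (∏ i ∈ Finset.range 1, σ i ^ 2) * ∏ i ∈ Finset.range (1 - 1), (1 - ρ i ^ 2)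
          = σ 0 ^ 2 := by simp
      refine ⟨by rw [h1, h2], iff_of_true (by rw [h1, h2]) ?_⟩
      intro p q hpq
      exact absurd hpq (by have hp := p.isLt; have hq := q.isLt; omega)
    · intro σ ρ hσ hρ C hC hdiag hoff
      have hsymm : ∀ i j, C j i = C i j := by
        intro i j
        have := congrFun (congrFun hC.1 i) j
        simpa [Matrix.conjTranspose_apply] using this
      set A : Matrix (Fin (k+1)) (Fin (k+1)) ℝ := C.submatrix Fin.castSucc Fin.castSucc with hAdef
      have hAentry : ∀ i j, A i j = C i.castSucc j.castSucc := fun i j => rfl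
      have hAsymm : ∀ i j, A j i = A i j := fun i j => hsymm _ _
      -- A is positive definite
      have hApos : A.PosDef := by
        refine Matrix.PosDef.of_dotProduct_mulVec_pos ?_ ?_
        · ext i j
          simp only [Matrix.conjTranspose_apply, star_trivial]
          exact hsymm _ _
        · intro x hx
          set y : Fin (k+1+1) → ℝ := fun t => if h : (t:ℕ) < k+1 then x ⟨t, h⟩ else 0 with hy
          have hyc : ∀ i : Fin (k+1), y i.castSucc = x i := by
            intro i; simp only [hy]; rw [dif_pos (by simp; have := i.isLt; omega)]; rfl
          have hylast : y (Fin.last (k+1)) = 0 := by simp [hy]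
          have hy0 : y ≠ 0 := by
            intro h0; apply hx; funext i
            have := congrFun h0 i.castSucc
            rw [hyc] at this; simpa using this
          have hmv : ∀ i : Fin (k+1), (C *ᵥ y) i.castSucc = (A *ᵥ x) i := by
            intro i
            simp only [Matrix.mulVec, dotProduct]
            rw [Fin.sum_univ_castSucc]
            simp [hyc, hylast, hAentry]
          have key : star y ⬝ᵥ C *ᵥ y = star x ⬝ᵥ A *ᵥ x := by
            simp only [dotProduct, Pi.star_apply, star_trivial]
            rw [Fin.sum_univ_castSucc, hylast]
            simp only [zero_mul, add_zero]
            exact Finset.sum_congr rfl fun i _ => by rw [hyc, hmv]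
          rw [← key]
          exact hC.dotProduct_mulVec_pos hy0
      have hAdet : 0 < A.det := hApos.det_pos
      have hAdiag : ∀ i : Fin (k+1), A i i = σ (i:ℕ) ^ 2 := by
        intro i; rw [hAentry]; simpa using hdiag i.castSucc
      have hAoff : ∀ (i : Fin (k+1)) (h : (i:ℕ) + 1 < k+1),
          A i ⟨(i:ℕ)+1, h⟩ = σ (i:ℕ) * σ ((i:ℕ)+1) * ρ (i:ℕ) := by
        intro i h
        rw [hAentry]
        have h2 : ((i.castSucc : Fin (k+1+1)) : ℕ) + 1 < k+1+1 := by
          simp only [Fin.coe_castSucc]; omega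
        have := hoff i.castSucc h2
        simp only [Fin.coe_castSucc] at this
        convert this using 2
        exact Fin.ext (by simp)
      -- determinant via Schur complement
      haveI : Invertible A := A.invertibleOfIsUnitDet hAdet.ne'.isUnit
      set c : Fin (k+1) → ℝ := fun j => C j.castSucc (Fin.last (k+1)) with hcdef
      set γ : ℝ := C (Fin.last (k+1)) (Fin.last (k+1)) with hγdef
      have hblock : (C.submatrix finSumFinEquiv finSumFinEquiv : Matrix _ _ ℝ)
          = Matrix.fromBlocks A (Matrix.of fun i (_ : Fin 1) => c i)
              (Matrix.of fun (_ : Fin 1) j => c j) (Matrix.of fun (_ _ : Fin 1) => γ) := by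
        ext i j
        have hnat : ∀ t : Fin 1, (finSumFinEquiv (Sum.inr t) : Fin (k+1+1)) = Fin.last (k+1) := by
          intro t
          apply Fin.ext
          simp [Fin.val_last]
        rcases i with i | i <;> rcases j with j | j <;>
          simp only [Matrix.submatrix_apply, finSumFinEquiv_apply_left, finSumFinEquiv_apply_right,
            Matrix.fromBlocks_apply₁₁, Matrix.fromBlocks_apply₁₂, Matrix.fromBlocks_apply₂₁,
            Matrix.fromBlocks_apply₂₂, Matrix.of_apply, hnat]
        · rfl
        · rfl
        · exact hsymm _ _
        · rfl
      have hdet : C.det = A.det * (γ - c ⬝ᵥ A⁻¹ *ᵥ c) := by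
        rw [← Matrix.det_submatrix_equiv_self finSumFinEquiv C, hblock, Matrix.det_fromBlocks₁₁]
        congr 1
        rw [Matrix.det_fin_one]
        simp only [Matrix.sub_apply, Matrix.of_apply, Matrix.mul_apply, invOf_eq_nonsing_inv,
          Matrix.mulVec, dotProduct, Finset.sum_mul, Finset.mul_sum]
        congr 1
        rw [Finset.sum_comm]
        exact Finset.sum_congr rfl fun i _ => Finset.sum_congr rfl fun j _ => by ring
      -- key quantities
      have hσk : 0 < σ k := hσ k (by omega)
      have hσk1 : 0 < σ (k+1) := hσ (k+1) (by omega)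
      have hρk : |ρ k| < 1 := hρ k (by omega)
      have hρk2 : ρ k ^ 2 < 1 := by
        have := abs_lt.1 hρk; nlinarith [this.1, this.2]
      set lam : ℝ := σ (k+1) * ρ k / σ k with hlamdef
      set v : Fin (k+1) → ℝ := fun j => if j = Fin.last k then lam else 0 with hvdef
      set b : Fin (k+1) → ℝ := c - A *ᵥ v with hbdef
      set q : ℝ := b ⬝ᵥ A⁻¹ *ᵥ b with hqdef
      have hAv : ∀ j, (A *ᵥ v) j = A j (Fin.last k) * lam := by
        intro j
        simp [Matrix.mulVec, dotProduct, hvdef, mul_ite, mul_zero]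
      -- entries needed
      have hclast : c (Fin.last k) = σ k * σ (k+1) * ρ k := by
        have h2 : (((Fin.last k).castSucc : Fin (k+1+1)) : ℕ) + 1 < k+1+1 := by
          simp only [Fin.coe_castSucc, Fin.val_last]; omega
        have := hoff (Fin.last k).castSucc h2
        simp only [Fin.coe_castSucc, Fin.val_last] at this
        rw [hcdef]
        convert this using 2
        exact Fin.ext (by simp)
      have hAlastlast : A (Fin.last k) (Fin.last k) = σ k ^ 2 := by
        have := hAdiag (Fin.last k); simpa using this
      have hγval : γ = σ (k+1) ^ 2 := by
        have := hdiag (Fin.last (k+1)); simpa [Fin.val_last] using this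
      -- inverse facts
      have hinvA : A⁻¹ * A = 1 := Matrix.nonsing_inv_mul A hAdet.ne'.isUnit
      have hAinv : A * A⁻¹ = 1 := Matrix.mul_nonsing_inv A hAdet.ne'.isUnit
      have hmvmv : ∀ u : Fin (k+1) → ℝ, A⁻¹ *ᵥ (A *ᵥ u) = u := by
        intro u; rw [Matrix.mulVec_mulVec, hinvA, Matrix.one_mulVec]
      have hmvmv' : ∀ u : Fin (k+1) → ℝ, A *ᵥ (A⁻¹ *ᵥ u) = u := by
        intro u; rw [Matrix.mulVec_mulVec, hAinv, Matrix.one_mulVec]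
      -- the identity: γ - c A⁻¹ c = β - q
      have hqexp : q = c ⬝ᵥ A⁻¹ *ᵥ c - 2 * (c ⬝ᵥ v) + (A *ᵥ v) ⬝ᵥ v := by
        have hAs : ∀ i j, A i j = A j i := fun i j => (hAsymm i j).symm
        rw [hqdef, hbdef, sub_dotProduct, Matrix.mulVec_sub, dotProduct_sub,
          dotProduct_sub, hmvmv, dot_mulVec_symm A hAs v (A⁻¹ *ᵥ c), hmvmv',
          dotProduct_comm v c]
        ring
      have hcv : c ⬝ᵥ v = (σ k * σ (k+1) * ρ k) * lam := by
        rw [← hclast]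
        simp [dotProduct, hvdef, mul_ite, mul_zero]
      have hAvv : (A *ᵥ v) ⬝ᵥ v = σ k ^ 2 * lam ^ 2 := by
        simp only [dotProduct, hAv]
        rw [← hAlastlast]
        simp [hvdef, mul_ite, mul_zero]
        ring
      set β : ℝ := σ (k+1) ^ 2 * (1 - ρ k ^ 2) with hβdef
      have hβpos : 0 < β := by rw [hβdef]; exact mul_pos (pow_pos hσk1 2) (by linarith)
      have hiden : γ - c ⬝ᵥ A⁻¹ *ᵥ c = β - q := by
        rw [hqexp, hcv, hAvv, hγval, hβdef, hlamdef]
        field_simp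
        ring
      have hdet2 : C.det = A.det * (β - q) := by rw [hdet, hiden]
      -- nonnegativity of q
      have hq_pos : b ≠ 0 → 0 < q := by
        intro hb
        have h1 := hApos.inv.dotProduct_mulVec_pos hb
        have hstar : star b = b := by funext i; simp
        rw [hstar] at h1
        exact h1
      have hq_nonneg : 0 ≤ q := by
        rcases eq_or_ne b 0 with hb | hb
        · rw [hqdef, hb]; simp
        · exact (hq_pos hb).le
      -- induction hypothesis
      obtain ⟨hle, hiff⟩ := ih σ ρ (fun i hi => hσ i (by omega)) (fun i hi => hρ i (by omega))
        A hApos hAdiag hAoff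
      simp only [Nat.add_sub_cancel] at hle hiff
      set P : ℝ := ∏ i ∈ Finset.range (k+1), σ i ^ 2 with hPdef
      set Q : ℝ := ∏ i ∈ Finset.range k, (1 - ρ i ^ 2) with hQdef
      -- last-column entries of A under the Markov condition
      have hAlast_of : (∀ p q : Fin (k+1), (p:ℕ) < (q:ℕ) →
            A p q = σ (p:ℕ) * σ (q:ℕ) * ∏ j ∈ Finset.Ico (p:ℕ) (q:ℕ), ρ j) →
          ∀ j : Fin (k+1), A j (Fin.last k) = σ (j:ℕ) * σ k * ∏ t ∈ Finset.Ico (j:ℕ) k, ρ t := by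
        intro hMkA j
        rcases lt_or_eq_of_le (Nat.lt_succ_iff.mp j.isLt) with h | h
        · have := hMkA j (Fin.last k) (by simpa [Fin.val_last] using h)
          simpa [Fin.val_last] using this
        · have hj : j = Fin.last k := Fin.ext (by simp [Fin.val_last, h])
          rw [hj, hAlastlast]
          simp [Fin.val_last]
          ring
      have harith : ∀ jv : ℕ, jv ≤ k →
          (σ jv * σ k * ∏ t ∈ Finset.Ico jv k, ρ t) * lam
            = σ jv * σ (k+1) * ∏ t ∈ Finset.Ico jv (k+1), ρ t := by
        intro jv h
        rw [Finset.prod_Ico_succ_top h, hlamdef]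
        field_simp
      have hb_iff : b = 0 ↔ ∀ j : Fin (k+1), c j = A j (Fin.last k) * lam := by
        rw [hbdef]
        constructor
        · intro h0 j
          have h1 := congrFun h0 j
          simp only [Pi.sub_apply, Pi.zero_apply, sub_eq_zero] at h1
          rw [h1, hAv]
        · intro h
          funext j
          simp only [Pi.sub_apply, Pi.zero_apply, sub_eq_zero, hAv, h j]
      -- Markov equivalence
      have hMk_iff : (∀ p q : Fin (k+1+1), (p:ℕ) < (q:ℕ) →
            C p q = σ (p:ℕ) * σ (q:ℕ) * ∏ j ∈ Finset.Ico (p:ℕ) (q:ℕ), ρ j)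
          ↔ ((∀ p q : Fin (k+1), (p:ℕ) < (q:ℕ) →
            A p q = σ (p:ℕ) * σ (q:ℕ) * ∏ j ∈ Finset.Ico (p:ℕ) (q:ℕ), ρ j) ∧ b = 0) := by
        constructor
        · intro hMkC
          have hMkA : ∀ p q : Fin (k+1), (p:ℕ) < (q:ℕ) →
              A p q = σ (p:ℕ) * σ (q:ℕ) * ∏ j ∈ Finset.Ico (p:ℕ) (q:ℕ), ρ j := by
            intro p q h
            have := hMkC p.castSucc q.castSucc (by simpa using h)
            simpa [hAentry] using this
          refine ⟨hMkA, hb_iff.mpr ?_⟩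
          intro j
          have hcj : c j = σ (j:ℕ) * σ (k+1) * ∏ t ∈ Finset.Ico (j:ℕ) (k+1), ρ t := by
            have h1 : ((j.castSucc : Fin (k+1+1)) : ℕ) < ((Fin.last (k+1) : Fin (k+1+1)) : ℕ) := by
              simp [Fin.val_last]; have := j.isLt; omega
            have := hMkC j.castSucc (Fin.last (k+1)) h1
            simpa [Fin.val_last] using this
          rw [hcj, hAlast_of hMkA j]
          exact (harith (j:ℕ) (Nat.lt_succ_iff.mp j.isLt)).symm
        · rintro ⟨hMkA, hb0⟩ p q hpq
          have hqlt := q.isLt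
          rcases lt_or_eq_of_le (Nat.lt_succ_iff.mp hqlt) with hql | hql
          · have hp' : (p:ℕ) < k+1 := by omega
            have h1 := hMkA ⟨(p:ℕ), hp'⟩ ⟨(q:ℕ), hql⟩ hpq
            have e1 : (Fin.castSucc (⟨(p:ℕ), hp'⟩ : Fin (k+1))) = p := by apply Fin.ext; simp
            have e2 : (Fin.castSucc (⟨(q:ℕ), hql⟩ : Fin (k+1))) = q := by apply Fin.ext; simp
            rw [hAentry, e1, e2] at h1
            simpa using h1
          · have hp' : (p:ℕ) < k+1 := by omega
            have hq' : q = Fin.last (k+1) := Fin.ext (by simp [Fin.val_last, hql])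
            have hcp := (hb_iff.mp hb0) ⟨(p:ℕ), hp'⟩
            have e1 : (Fin.castSucc (⟨(p:ℕ), hp'⟩ : Fin (k+1))) = p := by apply Fin.ext; simp
            have hthis : C (Fin.castSucc (⟨(p:ℕ), hp'⟩ : Fin (k+1))) (Fin.last (k+1))
                = A ⟨(p:ℕ), hp'⟩ (Fin.last k) * lam := hcp
            rw [e1] at hthis
            rw [hq', hthis, hAlast_of hMkA ⟨(p:ℕ), hp'⟩]
            simp only [Fin.val_last]
            have := harith (p:ℕ) (by omega)
            simpa using this
      -- assemble
      have hRHS : (∏ i ∈ Finset.range (k+1+1), σ i ^ 2)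
          * ∏ i ∈ Finset.range (k+1+1-1), (1 - ρ i ^ 2) = (P*Q)*β := by
        simp only [Nat.add_sub_cancel]
        rw [Finset.prod_range_succ (fun i => σ i ^ 2) (k+1),
          Finset.prod_range_succ (fun i => 1 - ρ i ^ 2) k, hPdef, hQdef, hβdef]
        ring
      clear_value A c γ lam v b q β P Q
      constructor
      · rw [hRHS, hdet2]
        nlinarith [mul_nonneg hAdet.le hq_nonneg, mul_le_mul_of_nonneg_right hle hβpos.le]
      · rw [hRHS, hdet2, hMk_iff]
        constructor
        · intro h
          have hqle : q ≤ 0 := by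
            nlinarith [mul_le_mul_of_nonneg_right hle hβpos.le, hAdet]
          have hq0 : q = 0 := le_antisymm hqle hq_nonneg
          have hb0 : b = 0 := by
            by_contra hb
            exact absurd hq0 (ne_of_gt (hq_pos hb))
          refine ⟨?_, hb0⟩
          apply hiff.mp
          rw [hq0] at h
          have h2 : A.det * β = (P*Q)*β := by linarith [h]
          exact mul_right_cancel₀ hβpos.ne' h2
        · rintro ⟨hMkA, hb0⟩
          have hq0 : q = 0 := by rw [hqdef, hb0]; simp
          rw [hq0, hiff.mpr hMkA]
          ring

/-- Among symmetric positive definite `n×n` matrices with prescribed variances `σ_i²` on the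
diagonal and prescribed consecutive covariances `σ_i σ_{i+1} ρ_i` (with `|ρ_i| < 1`), the
determinant is at most `(∏ σ_i²)·∏(1-ρ_i²)`, with equality exactly for the Markov matrix
`c_{kl} = σ_k σ_l ρ_k ⋯ ρ_{l-1}`. -/
theorem stmt15 (n : ℕ) (σ ρ : ℕ → ℝ)
    (hσ : ∀ i, i < n → 0 < σ i) (hρ : ∀ i, i + 1 < n → |ρ i| < 1)
    (C : Matrix (Fin n) (Fin n) ℝ) (hC : C.PosDef)
    (hdiag : ∀ i : Fin n, C i i = σ (i : ℕ) ^ 2)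
    (hoff : ∀ (i : Fin n) (h : (i : ℕ) + 1 < n),
      C i ⟨(i : ℕ) + 1, h⟩ = σ (i : ℕ) * σ ((i : ℕ) + 1) * ρ (i : ℕ)) :
    C.det ≤ (∏ i ∈ Finset.range n, σ i ^ 2) * ∏ i ∈ Finset.range (n - 1), (1 - ρ i ^ 2) ∧
    (C.det = (∏ i ∈ Finset.range n, σ i ^ 2) * ∏ i ∈ Finset.range (n - 1), (1 - ρ i ^ 2) ↔
      ∀ k l : Fin n, (k : ℕ) < (l : ℕ) →
        C k l = σ (k : ℕ) * σ (l : ℕ) * ∏ j ∈ Finset.Ico (k : ℕ) (l : ℕ), ρ j) := by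
  exact aux n σ ρ hσ hρ C hC hdiag hoff
end

section
/- Let (e_1,...,e_n) be unit vectors in a real inner product space with prescribed consecutive inner products ⟨e_i, e_{i+1}⟩ = ρ_i, |ρ_i| < 1. Then the Gram determinant det(⟨e_i, e_j⟩) is at most ∏_{i=1}^{n-1}(1-ρ_i²), and equality holds if and only if for every 1 ≤ k ≤ n-1 the orthogonal projection of e_{k+1} onto span{e_1,...,e_k} is parallel to e_k. -/
open Finset RealInnerProductSpace
open InnerProductSpace

section Aux

variable {E : Type*} [NormedAddCommGroup E] [InnerProductSpace ℝ E]

lemma aux_inner_span_zero {u : E} {s : Set E} (h : ∀ x ∈ s, ⟪u, x⟫ = 0) :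
    ∀ v ∈ Submodule.span ℝ s, ⟪u, v⟫ = 0 := by
  intro v hv
  induction hv using Submodule.span_induction with
  | mem x hx => exact h x hx
  | zero => exact inner_zero_right u
  | add x y hx hy ihx ihy => rw [inner_add_right, ihx, ihy, add_zero]
  | smul a x hx ihx => rw [real_inner_smul_right, ihx, mul_zero]

/-- Gram determinant equals product of squared norms of the Gram-Schmidt vectors. -/
lemma aux_gram_det (n : ℕ) (f : ℕ → E) :
    (Matrix.of fun i j : Fin n => ⟪f i, f j⟫).det
      = ∏ i ∈ Finset.range n, ‖gramSchmidt ℝ f i‖ ^ 2 := by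
  set g := gramSchmidt ℝ f with hg
  set L : Matrix (Fin n) (Fin n) ℝ :=
    Matrix.of fun i j => if (i : ℕ) = (j : ℕ) then 1 else ⟪g j, f i⟫ / ‖g j‖ ^ 2 with hL
  have hLlow : ∀ i j : Fin n, i < j → L i j = 0 := by
    intro i j hij
    have hne : (i : ℕ) ≠ (j : ℕ) := Nat.ne_of_lt hij
    simp only [hL, Matrix.of_apply, if_neg hne]
    rw [gramSchmidt_inv_triangular ℝ f (show (i : ℕ) < (j : ℕ) from hij), zero_div]
  have hf : ∀ i : Fin n, f i = ∑ j : Fin n, L i j • g j := by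
    intro i
    have hconv : ∑ j : Fin n, L i j • g j
        = ∑ j ∈ Finset.range n,
            (if (i : ℕ) = j then (1 : ℝ) else ⟪g j, f i⟫ / ‖g j‖ ^ 2) • g j := by
      rw [← Fin.sum_univ_eq_sum_range]
      rfl
    rw [hconv]
    have hin : (i : ℕ) < n := i.isLt
    rw [Finset.range_eq_Ico, ← Finset.sum_Ico_consecutive _ (Nat.zero_le i) hin.le,
      Finset.sum_eq_sum_Ico_succ_bot hin]
    have h2 : ∑ j ∈ Finset.Ico ((i : ℕ) + 1) n,
        (if (i : ℕ) = j then (1 : ℝ) else ⟪g j, f i⟫ / ‖g j‖ ^ 2) • g j = 0 := by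
      apply Finset.sum_eq_zero
      intro j hj
      have hij : (i : ℕ) < j := (Finset.mem_Ico.mp hj).1
      rw [if_neg hij.ne, gramSchmidt_inv_triangular ℝ f hij, zero_div, zero_smul]
    rw [h2, add_zero, if_pos rfl, one_smul]
    have h1 : ∑ j ∈ Finset.Ico 0 (i : ℕ),
        (if (i : ℕ) = j then (1 : ℝ) else ⟪g j, f i⟫ / ‖g j‖ ^ 2) • g j
        = ∑ j ∈ Finset.Iio (i : ℕ), (⟪g j, f i⟫ / ‖g j‖ ^ 2) • g j := by
      rw [Nat.Ico_zero_eq_range, ← Nat.Iio_eq_range]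
      apply Finset.sum_congr rfl
      intro j hj
      rw [if_neg (Finset.mem_Iio.mp hj).ne']
    rw [h1, add_comm]
    exact gramSchmidt_def'' ℝ f i
  have hGram : (Matrix.of fun i j : Fin n => ⟪f i, f j⟫)
      = L * Matrix.diagonal (fun j : Fin n => ‖g j‖ ^ 2) * L.transpose := by
    ext i k
    have hRHS : (L * Matrix.diagonal (fun j : Fin n => ‖g j‖ ^ 2) * L.transpose) i k
        = ∑ j : Fin n, L i j * ‖g j‖ ^ 2 * L k j := by
      rw [Matrix.mul_apply]
      apply Finset.sum_congr rfl
      intro j _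
      rw [Matrix.mul_diagonal, Matrix.transpose_apply]
    rw [hRHS, Matrix.of_apply]
    rw [hf i, sum_inner]
    apply Finset.sum_congr rfl
    intro j _
    rw [real_inner_smul_left, hf k, inner_sum]
    rw [Finset.sum_congr rfl (fun (l : Fin n) _ => real_inner_smul_right (g (j : ℕ)) (g (l : ℕ)) (L k l))]
    rw [Finset.sum_eq_single j]
    · rw [real_inner_self_eq_norm_sq]
      ring
    · intro l _ hl
      have hgz : ⟪g (j : ℕ), g (l : ℕ)⟫ = 0 :=
        gramSchmidt_orthogonal ℝ f (fun h => hl (Fin.ext (by exact_mod_cast h.symm)))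
      rw [hgz, mul_zero]
    · simp
  rw [hGram, Matrix.det_mul, Matrix.det_mul, Matrix.det_transpose, Matrix.det_diagonal]
  have hLdet : L.det = 1 := by
    rw [Matrix.det_of_lowerTriangular L (fun i j h => hLlow i j (OrderDual.toDual_lt_toDual.mp h))]
    simp [hL]
  rw [hLdet, one_mul, mul_one, ← Fin.prod_univ_eq_prod_range]

end Aux

set_option maxHeartbeats 2000000 in
/-- For unit vectors `e_1,…,e_n` in a real inner product space with consecutive inner products
`ρ_i = ⟪e_i, e_{i+1}⟫`, `|ρ_i| < 1`, the Gram determinant is at most `∏ (1-ρ_i²)`, with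
equality iff each projection of `e_{k+1}` onto `span{e_1,…,e_k}` is parallel to `e_k`
(expressed here as: `e_{k+1} - a • e_k` is orthogonal to `span{e_1,…,e_k}` for some `a`). -/
theorem stmt16 {E : Type*} [NormedAddCommGroup E] [InnerProductSpace ℝ E]
    (n : ℕ) (e : ℕ → E) (ρ : ℕ → ℝ)
    (hunit : ∀ i, 1 ≤ i → i ≤ n → ‖e i‖ = 1)
    (hρ : ∀ i, 1 ≤ i → i + 1 ≤ n → ⟪e i, e (i + 1)⟫ = ρ i)
    (hsmall : ∀ i, 1 ≤ i → i + 1 ≤ n → |ρ i| < 1) :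
    (Matrix.of fun i j : Fin n => ⟪e ((i : ℕ) + 1), e ((j : ℕ) + 1)⟫).det ≤
      ∏ i ∈ Finset.Ico 1 n, (1 - ρ i ^ 2) ∧
    ((Matrix.of fun i j : Fin n => ⟪e ((i : ℕ) + 1), e ((j : ℕ) + 1)⟫).det =
        ∏ i ∈ Finset.Ico 1 n, (1 - ρ i ^ 2) ↔
      ∀ k, 1 ≤ k → k ≤ n - 1 → ∃ a : ℝ,
        ∀ v ∈ Submodule.span ℝ (e '' Set.Icc 1 k), ⟪e (k + 1) - a • e k, v⟫ = 0) := by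
  rcases Nat.eq_zero_or_pos n with hn0 | hn
  · subst hn0
    refine ⟨le_of_eq ?_, ?_, ?_⟩
    · simp [Matrix.det_isEmpty]
    · intro _ k hk1 hk2; omega
    · intro _; simp [Matrix.det_isEmpty]
  set f : ℕ → E := fun j => e (j + 1) with hfdef
  set g := gramSchmidt ℝ f with hg
  have hdet : (Matrix.of fun i j : Fin n => ⟪e ((i : ℕ) + 1), e ((j : ℕ) + 1)⟫).det
      = ∏ i ∈ Finset.range n, ‖g i‖ ^ 2 := aux_gram_det n f
  have hspan : ∀ k : ℕ, Submodule.span ℝ (f '' Set.Iio k)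
      = Submodule.span ℝ (e '' Set.Icc 1 k) := by
    intro k
    congr 1
    ext x
    constructor
    · rintro ⟨j, hj, rfl⟩
      exact ⟨j + 1, ⟨by omega, by simp only [Set.mem_Iio] at hj; omega⟩, rfl⟩
    · rintro ⟨m, ⟨h1, h2⟩, rfl⟩
      refine ⟨m - 1, by simp only [Set.mem_Iio]; omega, ?_⟩
      rw [hfdef]; simp only; rw [Nat.sub_add_cancel h1]
  have horthg : ∀ k : ℕ, ∀ v ∈ Submodule.span ℝ (f '' Set.Iio k), ⟪g k, v⟫ = 0 := by
    intro k
    rw [← span_gramSchmidt_Iio ℝ f k]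
    apply aux_inner_span_zero
    rintro x ⟨j, hj, rfl⟩
    exact gramSchmidt_orthogonal ℝ f (ne_of_gt hj)
  set p : ℕ → E := fun k => f k - g k with hp
  have hfgp : ∀ k : ℕ, f k = g k + p k := by
    intro k; rw [hp]; simp
  have hpmem : ∀ k : ℕ, p k ∈ Submodule.span ℝ (f '' Set.Iio k) := by
    intro k
    have hps : p k = ∑ j ∈ Finset.Iio k, (ℝ ∙ g j).starProjection (f k) := by
      rw [hp]; simp only
      rw [hg, gramSchmidt_def ℝ f k, sub_sub_cancel]
    rw [hps, ← span_gramSchmidt_Iio ℝ f k]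
    apply Submodule.sum_mem
    intro j hj
    have hle : (ℝ ∙ g j) ≤ Submodule.span ℝ (g '' Set.Iio k) := by
      rw [Submodule.span_singleton_le_iff_mem]
      exact Submodule.subset_span ⟨j, Finset.mem_Iio.mp hj, rfl⟩
    exact hle (Submodule.starProjection_apply_mem _ _)
  have hfnorm : ∀ k : ℕ, k < n → ‖f k‖ = 1 := fun k hk =>
    hunit (k + 1) (by omega) (by omega)
  have hpyth : ∀ k : ℕ, k < n → ‖g k‖ ^ 2 = 1 - ‖p k‖ ^ 2 := by
    intro k hk
    have hor : ⟪g k, p k⟫ = 0 := horthg k _ (hpmem k)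
    have hns := norm_add_sq_real (g k) (p k)
    rw [← hfgp k, hfnorm k hk, hor] at hns
    nlinarith [hns]
  have hinnerp : ∀ k : ℕ, 1 ≤ k → k < n → ⟪f (k - 1), p k⟫ = ρ k := by
    intro k h1 h2
    have hmem : f (k - 1) ∈ Submodule.span ℝ (f '' Set.Iio k) :=
      Submodule.subset_span ⟨k - 1, by simp only [Set.mem_Iio]; omega, rfl⟩
    have hgz : ⟪f (k - 1), g k⟫ = 0 := by
      rw [real_inner_comm]; exact horthg k _ hmem
    have hfk1 : f (k - 1) = e k := by rw [hfdef]; simp only; rw [Nat.sub_add_cancel h1]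
    have hsplit : ⟪f (k - 1), p k⟫ = ⟪f (k - 1), f k⟫ - ⟪f (k - 1), g k⟫ := by
      rw [hp]; simp only [inner_sub_right]
    rw [hsplit, hgz, sub_zero, hfk1, hfdef]
    exact hρ k h1 (by omega)
  set B : ℕ → ℝ := fun i => if i = 0 then 1 else 1 - ρ i ^ 2 with hB
  have hA0 : ‖g 0‖ ^ 2 = 1 := by
    have hz : g 0 = f 0 := by
      rw [hg]
      have hzz := gramSchmidt_bot (𝕜 := ℝ) (ι := ℕ) f
      rwa [Nat.bot_eq_zero] at hzz
    rw [hz, hfnorm 0 hn, one_pow]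
  have hAB : ∀ i ∈ Finset.range n, ‖g i‖ ^ 2 ≤ B i := by
    intro i hi
    rw [Finset.mem_range] at hi
    rcases Nat.eq_zero_or_pos i with h0 | h1
    · subst h0; rw [hA0, hB]; simp
    · rw [hB]; simp only [if_neg (Nat.pos_iff_ne_zero.mp h1)]
      rw [hpyth i hi]
      have hcs : |⟪f (i - 1), p i⟫| ≤ ‖f (i - 1)‖ * ‖p i‖ := abs_real_inner_le_norm _ _
      rw [hinnerp i h1 hi, hfnorm (i - 1) (by omega), one_mul] at hcs
      nlinarith [abs_nonneg (ρ i), norm_nonneg (p i), hcs, sq_abs (ρ i)]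
  have hBpos : ∀ i ∈ Finset.range n, 0 < B i := by
    intro i hi
    rw [Finset.mem_range] at hi
    rcases Nat.eq_zero_or_pos i with h0 | h1
    · subst h0; rw [hB]; simp
    · rw [hB]; simp only [if_neg (Nat.pos_iff_ne_zero.mp h1)]
      have hsm := hsmall i h1 (by omega)
      nlinarith [abs_nonneg (ρ i), sq_abs (ρ i)]
  have hBprod : ∏ i ∈ Finset.range n, B i = ∏ i ∈ Finset.Ico 1 n, (1 - ρ i ^ 2) := by
    rw [Finset.range_eq_Ico, Finset.prod_eq_prod_Ico_succ_bot hn]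
    have h0 : B 0 = 1 := by simp only [hB]; norm_num
    rw [h0, one_mul]
    apply Finset.prod_congr rfl
    intro i hi
    have hne : ¬ i = 0 := by have := (Finset.mem_Ico.mp hi).1; omega
    simp only [hB]
    rw [if_neg hne]
  have hApos : ∀ i ∈ Finset.range n, (0:ℝ) ≤ ‖g i‖ ^ 2 := fun i _ => sq_nonneg _
  constructor
  · rw [hdet, ← hBprod]
    exact Finset.prod_le_prod hApos hAB
  rw [hdet, ← hBprod]
  constructor
  · -- equality implies the parallel condition
    intro heq k hk1 hk2
    have hkn : k < n := by omega
    have hpw : ∀ j ∈ Finset.range n, ‖g j‖ ^ 2 = B j := by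
      intro j hj
      refine le_antisymm (hAB j hj) ?_
      have hP : (0:ℝ) < ∏ i ∈ (Finset.range n).erase j, B i :=
        Finset.prod_pos fun i hi => hBpos i (Finset.mem_of_mem_erase hi)
      have hle : ∏ i ∈ Finset.range n, ‖g i‖ ^ 2
          ≤ ‖g j‖ ^ 2 * ∏ i ∈ (Finset.range n).erase j, B i := by
        rw [← Finset.mul_prod_erase _ _ hj]
        exact mul_le_mul_of_nonneg_left
          (Finset.prod_le_prod (fun i hi => hApos i (Finset.mem_of_mem_erase hi))
            (fun i hi => hAB i (Finset.mem_of_mem_erase hi))) (sq_nonneg _)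
      rw [heq, ← Finset.mul_prod_erase _ _ hj] at hle
      exact le_of_mul_le_mul_right (by linarith) hP
    have hAk : ‖g k‖ ^ 2 = 1 - ρ k ^ 2 := by
      have hh := hpw k (Finset.mem_range.mpr hkn)
      simp only [hB] at hh
      rwa [if_neg (by omega : ¬ k = 0)] at hh
    have hpk : ‖p k‖ ^ 2 = ρ k ^ 2 := by
      have hh := hpyth k hkn
      nlinarith [hh, hAk]
    have hinn := hinnerp k hk1 hkn
    have hpar : p k = ρ k • f (k - 1) := by
      have hz : ‖p k - ρ k • f (k - 1)‖ ^ 2 = 0 := by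
        have hexp := norm_sub_sq_real (p k) (ρ k • f (k - 1))
        have h1 : ⟪p k, f (k - 1)⟫ = ρ k := by rw [real_inner_comm]; exact hinn
        rw [real_inner_smul_right, h1, norm_smul, hfnorm (k - 1) (by omega), mul_one,
          Real.norm_eq_abs, sq_abs] at hexp
        rw [hexp, hpk]; ring
      have h0 : p k - ρ k • f (k - 1) = 0 := by
        rwa [pow_eq_zero_iff (two_ne_zero), norm_eq_zero] at hz
      exact sub_eq_zero.mp h0
    refine ⟨ρ k, ?_⟩
    intro v hv
    rw [← hspan k] at hv
    have hek : e k = f (k - 1) := by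
      rw [hfdef]; simp only; rw [Nat.sub_add_cancel hk1]
    have hkey : e (k + 1) - ρ k • e k = g k := by
      have he1 : e (k + 1) = f k := by rw [hfdef]
      rw [he1, hek, ← hpar, hfgp k]
      abel
    rw [hkey]
    exact horthg k v hv
  · -- parallel condition implies equality
    intro hcond
    apply Finset.prod_congr rfl
    intro i hi
    rw [Finset.mem_range] at hi
    rcases Nat.eq_zero_or_pos i with h0 | h1
    · subst h0; rw [hA0, hB]; simp
    · obtain ⟨a, ha⟩ := hcond i h1 (by omega)
      have ha' : ∀ v ∈ Submodule.span ℝ (f '' Set.Iio i),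
          ⟪e (i + 1) - a • e i, v⟫ = 0 := by
        rw [hspan i]; exact ha
      have hek : e i = f (i - 1) := by
        rw [hfdef]; simp only; rw [Nat.sub_add_cancel h1]
      have hwmem : p i - a • f (i - 1) ∈ Submodule.span ℝ (f '' Set.Iio i) :=
        Submodule.sub_mem _ (hpmem i)
          (Submodule.smul_mem _ _
            (Submodule.subset_span ⟨i - 1, by simp only [Set.mem_Iio]; omega, rfl⟩))
      have hgw : ⟪g i, p i - a • f (i - 1)⟫ = 0 := horthg i _ hwmem
      have hkey : e (i + 1) - a • e i = g i + (p i - a • f (i - 1)) := by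
        have he1 : e (i + 1) = f i := by rw [hfdef]
        rw [he1, hek, hfgp i]
        abel
      have hww : ⟪p i - a • f (i - 1), p i - a • f (i - 1)⟫ = 0 := by
        have h2 := ha' _ hwmem
        rw [hkey, inner_add_left, hgw, zero_add] at h2
        exact h2
      have hpi : p i = a • f (i - 1) := by
        have hw0 : p i - a • f (i - 1) = 0 := by rwa [inner_self_eq_zero] at hww
        exact sub_eq_zero.mp hw0
      have hai : ρ i = a := by
        have h2 := hinnerp i h1 hi
        rw [hpi, real_inner_smul_right, real_inner_self_eq_norm_sq,
          hfnorm (i - 1) (by omega)] at h2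
        simpa using h2.symm
      have hpn : ‖p i‖ ^ 2 = ρ i ^ 2 := by
        rw [hpi, norm_smul, hfnorm (i - 1) (by omega), mul_one, Real.norm_eq_abs,
          sq_abs, hai]
      rw [hpyth i hi, hpn, hB]
      simp only [if_neg (Nat.pos_iff_ne_zero.mp h1)]
end

section
/- Let ρ_1, ..., ρ_{n-1} be reals with |ρ_i| < 1. Then there exist unit vectors e_1, ..., e_n in ℝ^n that are linearly independent, satisfy ⟨e_i, e_{i+1}⟩ = ρ_i, and satisfy the Markov product property ⟨e_k, e_l⟩ = ∏_{j=k}^{l-1} ρ_j for all k < l. -/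
open Finset RealInnerProductSpace

/-- Given `ρ_1,…,ρ_{n-1}` with `|ρ_i| < 1` (0-based: `ρ 0,…,ρ (n-2)`), there exist linearly
independent unit vectors `e_0,…,e_{n-1}` in `ℝ^n` with `⟪e_i, e_{i+1}⟫ = ρ_i` and the Markov
product property `⟪e_k, e_l⟫ = ρ_k ⋯ ρ_{l-1}` for `k < l`. -/
theorem stmt18 (n : ℕ) (ρ : ℕ → ℝ) (hρ : ∀ i, i + 1 < n → |ρ i| < 1) :
    ∃ e : Fin n → EuclideanSpace ℝ (Fin n),
      LinearIndependent ℝ e ∧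
      (∀ i : Fin n, ‖e i‖ = 1) ∧
      (∀ (i : Fin n) (h : (i : ℕ) + 1 < n), ⟪e i, e ⟨(i : ℕ) + 1, h⟩⟫ = ρ (i : ℕ)) ∧
      (∀ k l : Fin n, (k : ℕ) < (l : ℕ) →
        ⟪e k, e l⟫ = ∏ j ∈ Finset.Ico (k : ℕ) (l : ℕ), ρ j) := by
  classical
  set c : ℕ → ℝ := fun i => if i = 0 then 1 else Real.sqrt (1 - ρ (i - 1) ^ 2) with hc
  have hρ2 : ∀ i, i + 1 < n → ρ i ^ 2 < 1 := by
    intro i hi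
    have h1 : |ρ i| < 1 := hρ _ hi
    have := abs_nonneg (ρ i); nlinarith [sq_abs (ρ i)]
  have hc2 : ∀ i, 0 < i → i < n → c i ^ 2 = 1 - ρ (i - 1) ^ 2 := by
    intro i hi hin
    have h2 : ρ (i - 1) ^ 2 < 1 := hρ2 _ (by omega)
    simp only [hc]
    rw [if_neg (by omega : ¬ i = 0), Real.sq_sqrt (by linarith)]
  have hcne : ∀ i, i < n → c i ≠ 0 := by
    intro i hin
    rcases Nat.eq_zero_or_pos i with h | h
    · simp [hc, h]
    · have h1 := hc2 i h hin
      have h2 : ρ (i - 1) ^ 2 < 1 := hρ2 _ (by omega)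
      intro h0
      rw [h0] at h1
      nlinarith
  set M : Matrix (Fin n) (Fin n) ℝ := fun k i =>
    if (i : ℕ) ≤ (k : ℕ) then c i * ∏ j ∈ Finset.Ico (i : ℕ) (k : ℕ), ρ j else 0 with hM
  set e : Fin n → EuclideanSpace ℝ (Fin n) :=
    fun k => (WithLp.linearEquiv 2 ℝ (Fin n → ℝ)).symm (M k) with he
  have hS1 : ∀ k, k < n →
      ∑ i ∈ Finset.range (k + 1), c i ^ 2 * (∏ j ∈ Finset.Ico i k, ρ j) ^ 2 = 1 := by
    intro k
    induction k with
    | zero => intro _; simp [hc]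
    | succ k ih =>
      intro hk
      have step : ∑ i ∈ Finset.range (k + 2), c i ^ 2 * (∏ j ∈ Finset.Ico i (k + 1), ρ j) ^ 2
          = ρ k ^ 2 * ∑ i ∈ Finset.range (k + 1), c i ^ 2 * (∏ j ∈ Finset.Ico i k, ρ j) ^ 2
            + c (k + 1) ^ 2 := by
        rw [Finset.sum_range_succ]
        simp only [Finset.Ico_self, Finset.prod_empty, one_pow, mul_one]
        rw [Finset.mul_sum]
        congr 1
        apply Finset.sum_congr rfl
        intro i hi
        have hik : i ≤ k := by simpa [Nat.lt_succ_iff] using hi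
        rw [Finset.prod_Ico_succ_top hik]
        ring
      rw [step, ih (by omega), hc2 (k + 1) (by omega) hk]
      simp only [Nat.add_sub_cancel]
      ring
  have hinner : ∀ k l : Fin n, (k : ℕ) ≤ (l : ℕ) →
      ⟪e k, e l⟫ = ∏ j ∈ Finset.Ico (k : ℕ) (l : ℕ), ρ j := by
    intro k l hkl
    have h0 : ⟪e k, e l⟫ = ∑ i : Fin n, M k i * M l i := by
      rw [he]
      simp [PiLp.inner_apply, RCLike.inner_apply, WithLp.linearEquiv]; exact Finset.sum_congr rfl (fun i _ => mul_comm _ _)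
    rw [h0]
    have hterm : ∀ i : Fin n, M k i * M l i =
        (fun i : ℕ => if i ≤ (k : ℕ) then
          (c i ^ 2 * (∏ j ∈ Finset.Ico i (k : ℕ), ρ j) ^ 2) *
            ∏ j ∈ Finset.Ico (k : ℕ) (l : ℕ), ρ j
        else 0) (i : ℕ) := by
      intro i
      rw [hM]
      by_cases h : (i : ℕ) ≤ (k : ℕ)
      · simp only [h, if_true, if_pos (le_trans h hkl)]
        rw [← Finset.prod_Ico_consecutive ρ h hkl]
        ring
      · simp [h]
    rw [Finset.sum_congr rfl (fun i _ => hterm i)]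
    rw [Fin.sum_univ_eq_sum_range (fun i : ℕ => if i ≤ (k : ℕ) then
      (c i ^ 2 * (∏ j ∈ Finset.Ico i (k : ℕ), ρ j) ^ 2) *
        ∏ j ∈ Finset.Ico (k : ℕ) (l : ℕ), ρ j else 0) n]
    rw [Finset.sum_ite, Finset.sum_const_zero, add_zero, ← Finset.sum_mul]
    have hfil : Finset.filter (fun i => i ≤ (k : ℕ)) (Finset.range n)
        = Finset.range ((k : ℕ) + 1) := by
      ext x; simp [Nat.lt_succ_iff]
      intro h; omega
    rw [hfil, hS1 k k.2, one_mul]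
  have hnorm : ∀ k : Fin n, ‖e k‖ = 1 := by
    intro k
    have h1 : ⟪e k, e k⟫ = 1 := by rw [hinner k k le_rfl]; simp
    have h2 : ‖e k‖ * ‖e k‖ = 1 := by
      rw [← real_inner_self_eq_norm_mul_norm, h1]
    rcases mul_self_eq_one_iff.mp h2 with h | h
    · exact h
    · nlinarith [norm_nonneg (e k)]
  refine ⟨e, ?_, hnorm, ?_, ?_⟩
  · have hdet : M.det ≠ 0 := by
      have htri : M.BlockTriangular OrderDual.toDual := by
        intro i j hij
        have hij' : (i : ℕ) < (j : ℕ) := hij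
        rw [hM]
        exact if_neg (by omega)
      rw [Matrix.det_of_lowerTriangular M htri]
      apply Finset.prod_ne_zero_iff.mpr
      intro i _
      rw [hM]
      simp only [le_refl, if_true, Finset.Ico_self, Finset.prod_empty, mul_one]
      exact hcne i i.2
    have hli : LinearIndependent ℝ (fun k => M k) :=
      Matrix.linearIndependent_rows_iff_isUnit.mpr
        ((Matrix.isUnit_iff_isUnit_det M).mpr (isUnit_iff_ne_zero.mpr hdet))
    exact hli.map' (WithLp.linearEquiv 2 ℝ (Fin n → ℝ)).symm.toLinearMap
      (LinearEquiv.ker _)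
  · intro i h
    rw [hinner i ⟨(i : ℕ) + 1, h⟩ (by simp)]
    simp
  · intro k l hkl
    exact hinner k l hkl.le
end
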